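/- arXiv:1109.3495 — 8 statements merged into one kernel-verified Lean document; each statement's English description precedes it below -/
import Mathlib

section
/- Let T > 0, let f ∈ L¹(ℝ) ∩ L²(ℝ), and let u ∈ L²(ℝ) satisfy f(x) = u(x−T) − u(x) for almost every x ∈ ℝ. Then for every integer k, the Fourier transform of f vanishes at k/T: f̂(k/T) = 0. -/
open MeasureTheory Complex

-- translate an a.e. statement
lemma ae_translate {p : ℝ → Prop} (h : ∀ᵐ x : ℝ, p x) (a : ℝ) :
    ∀ᵐ x : ℝ, p (x + a) := by
  have hemb := (MeasurableEquiv.addRight a).measurableEmbedding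
  have hmap : Measure.map (· + a) (volume : Measure ℝ) = volume :=
    (measurePreserving_add_right volume a).map_eq
  have : ∀ᵐ y ∂(Measure.map (· + a) (volume : Measure ℝ)), p y := by rw [hmap]; exact h
  have := hemb.ae_map_iff.mp (by simpa using this)
  simpa using this

theorem stmt_0 (T : ℝ) (hT : 0 < T) (f u : ℝ → ℂ)
    (hf1 : Integrable f (volume : Measure ℝ))
    (hf2 : MemLp f 2 (volume : Measure ℝ))
    (hu : MemLp u 2 (volume : Measure ℝ))
    (heq : ∀ᵐ x : ℝ, f x = u (x - T) - u x) :
    ∀ k : ℤ,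
      (∫ x : ℝ, f x * Complex.exp (-2 * Real.pi * I * x * ((k : ℝ) / T))) = 0 := by
  intro k
  set ξ : ℝ := (k : ℝ) / T with hξ
  set e : ℝ → ℂ := fun x => Complex.exp (((-2 * Real.pi * x * ξ : ℝ) : ℂ) * I) with he
  have hinteg_eq : ∀ x : ℝ, f x * Complex.exp (-2 * Real.pi * I * x * ((k : ℝ) / T)) = f x * e x := by
    intro x
    congr 1
    rw [he]
    congr 1
    rw [hξ]
    push_cast
    ring
  rw [show (∫ x : ℝ, f x * Complex.exp (-2 * Real.pi * I * x * ((k : ℝ) / T)))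
      = ∫ x : ℝ, f x * e x from integral_congr_ae (Filter.Eventually.of_forall hinteg_eq)]
  set c : ℂ := ∫ x : ℝ, f x * e x with hc
  -- basic properties of e
  have he_cont : Continuous e := by
    apply Complex.continuous_exp.comp
    continuity
  have he_norm : ∀ x, ‖e x‖ = 1 := by
    intro x
    rw [he]
    simp [Complex.norm_exp]
  have he_per : ∀ (m : ℤ) (x : ℝ), e (x + m * T) = e x := by
    intro m x
    rw [he]
    simp only
    have hreal : (-2 * Real.pi * (x + m * T) * ξ : ℝ)
        = -2 * Real.pi * x * ξ + 2 * Real.pi * (-(m * k) : ℤ) := by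
      have hTne : T ≠ 0 := ne_of_gt hT
      rw [hξ]; field_simp; push_cast; ring
    have harg : ((-2 * Real.pi * (x + ↑m * T) * ξ : ℝ) : ℂ) * I
        = ((-2 * Real.pi * x * ξ : ℝ) : ℂ) * I + ((-(m * k) : ℤ) : ℂ) * (2 * Real.pi * I) := by
      rw [hreal]
      push_cast
      ring
    rw [harg, Complex.exp_add, Complex.exp_int_mul_two_pi_mul_I, mul_one]
  -- shifted a.e. identity
  have hshift : ∀ a : ℝ, ∀ᵐ x : ℝ, f (x + a) = u (x + a - T) - u (x + a) := fun a =>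
    ae_translate heq a
  -- partial sums of translates, and the telescoped form
  set g : ℕ → ℝ → ℂ := fun N x => ∑ j ∈ Finset.range N, f (x + j * T) with hg
  set w : ℕ → ℝ → ℂ := fun N x => u (x - T) - u (x + N * T - T) with hw
  have hgw : ∀ N : ℕ, ∀ᵐ x : ℝ, g N x = w N x := by
    intro N
    have hall : ∀ᵐ x : ℝ, ∀ j : ℕ, f (x + j * T) = u (x + j * T - T) - u (x + j * T) :=
      (MeasureTheory.ae_all_iff).mpr fun j => hshift (j * T)
    filter_upwards [hall] with x hx
    rw [hg, hw]
    simp only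
    have hterm : ∀ j ∈ Finset.range N, f (x + j * T)
        = (fun j : ℕ => u (x + j * T - T)) j - (fun j : ℕ => u (x + j * T - T)) (j + 1) := by
      intro j _
      rw [hx j]
      simp only
      congr 2
      push_cast; ring
    rw [Finset.sum_congr rfl hterm, Finset.sum_range_sub']
    norm_num
  -- integrability of translates and of the products with e
  have hfa : ∀ a : ℝ, Integrable (fun x => f (x + a)) volume := fun a =>
    ((measurePreserving_add_right volume a).integrable_comp hf1.1).mpr hf1
  have hfe : ∀ a : ℝ, Integrable (fun x => f (x + a) * e x) volume := by
    intro a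
    have : Integrable (fun x => e x * f (x + a)) volume :=
      (hfa a).bdd_mul he_cont.aestronglyMeasurable (c := 1) (Filter.Eventually.of_forall fun x => le_of_eq (he_norm x))
    simpa [mul_comm] using this
  have hge : ∀ N : ℕ, Integrable (fun x => g N x * e x) volume := by
    intro N
    rw [hg]
    simp only [Finset.sum_mul]
    exact integrable_finset_sum _ fun j _ => hfe (j * T)
  -- the key identity : ∫ g N * e = N • c
  have hone : ∀ j : ℕ, (∫ x : ℝ, f (x + (j : ℝ) * T) * e x) = c := by
    intro j
    have h3 : ∀ y : ℝ, e (y - (j : ℝ) * T) = e y := by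
      intro y
      have h4 := he_per (-(j : ℤ)) y
      push_cast at h4
      rw [← h4]
      congr 1
      ring
    have h2 : ∀ x : ℝ, (fun y => f y * e (y - (j : ℝ) * T)) (x + (j : ℝ) * T)
        = f (x + (j : ℝ) * T) * e x := by
      intro x; simp only; rw [show x + (j : ℝ) * T - (j : ℝ) * T = x by ring]
    calc (∫ x : ℝ, f (x + (j : ℝ) * T) * e x)
        = ∫ x : ℝ, (fun y => f y * e (y - (j : ℝ) * T)) (x + (j : ℝ) * T) := by
          simp only [h2]
      _ = ∫ y : ℝ, f y * e (y - (j : ℝ) * T) :=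
          integral_add_right_eq_self (fun y => f y * e (y - (j : ℝ) * T)) ((j : ℝ) * T)
      _ = c := by rw [hc]; congr 1; ext y; rw [h3]
  have hkey : ∀ N : ℕ, (∫ x : ℝ, g N x * e x) = (N : ℂ) * c := by
    intro N
    calc (∫ x : ℝ, g N x * e x)
        = ∫ x : ℝ, ∑ j ∈ Finset.range N, f (x + (j : ℝ) * T) * e x := by
          rw [hg]; simp only [Finset.sum_mul]
      _ = ∑ j ∈ Finset.range N, ∫ x : ℝ, f (x + (j : ℝ) * T) * e x :=
          integral_finset_sum _ (fun j _ => hfe ((j : ℝ) * T))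
      _ = (N : ℂ) * c := by
          rw [Finset.sum_congr rfl (fun j _ => hone j), Finset.sum_const, Finset.card_range,
            nsmul_eq_mul]
  -- L² facts about u and w
  have hut : ∀ a : ℝ, MemLp (fun x => u (x + a)) 2 (volume : Measure ℝ) := fun a =>
    hu.comp_measurePreserving (measurePreserving_add_right volume a)
  set U : ℝ := ∫ x : ℝ, ‖u x‖ ^ 2 with hU
  have hU_nonneg : 0 ≤ U := integral_nonneg fun x => sq_nonneg _
  have husq : ∀ a : ℝ, Integrable (fun x => ‖u (x + a)‖ ^ 2) volume := fun a =>
    (memLp_two_iff_integrable_sq_norm (hut a).1).mp (hut a)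
  have husq_int : ∀ a : ℝ, (∫ x : ℝ, ‖u (x + a)‖ ^ 2) = U := fun a =>
    integral_add_right_eq_self (fun y => ‖u y‖ ^ 2) a
  have hw_eq : ∀ N : ℕ, w N = fun x => u (x + (-T)) - u (x + ((N : ℝ) * T - T)) := by
    intro N
    funext x
    rw [hw]
    simp only
    rw [show x - T = x + (-T) by ring, show x + (N : ℝ) * T - T = x + ((N : ℝ) * T - T) by ring]
  have hw2 : ∀ N : ℕ, MemLp (w N) 2 (volume : Measure ℝ) := by
    intro N
    rw [hw_eq N]
    exact (hut (-T)).sub (hut ((N : ℝ) * T - T))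
  have hwsq : ∀ N : ℕ, Integrable (fun x => ‖w N x‖ ^ 2) volume := fun N =>
    (memLp_two_iff_integrable_sq_norm (hw2 N).1).mp (hw2 N)
  have hwsq_le : ∀ N : ℕ, (∫ x : ℝ, ‖w N x‖ ^ 2) ≤ 4 * U := by
    intro N
    have hptw : ∀ x : ℝ, ‖w N x‖ ^ 2
        ≤ 2 * ‖u (x + (-T))‖ ^ 2 + 2 * ‖u (x + ((N : ℝ) * T - T))‖ ^ 2 := by
      intro x
      rw [hw_eq N]
      simp only
      have h1 := norm_sub_le (u (x + (-T))) (u (x + ((N : ℝ) * T - T)))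
      have h2 : (0:ℝ) ≤ ‖u (x + (-T)) - u (x + ((N : ℝ) * T - T))‖ := norm_nonneg _
      nlinarith [h1, h2, sq_nonneg (‖u (x + (-T))‖ - ‖u (x + ((N : ℝ) * T - T))‖),
        norm_nonneg (u (x + (-T))), norm_nonneg (u (x + ((N : ℝ) * T - T)))]
    calc (∫ x : ℝ, ‖w N x‖ ^ 2)
        ≤ ∫ x : ℝ, (2 * ‖u (x + (-T))‖ ^ 2 + 2 * ‖u (x + ((N : ℝ) * T - T))‖ ^ 2) :=
          integral_mono (hwsq N) (((husq (-T)).const_mul 2).add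
            (((husq ((N : ℝ) * T - T))).const_mul 2)) hptw
      _ = 4 * U := by
          rw [integral_add ((husq (-T)).const_mul 2) (((husq ((N : ℝ) * T - T))).const_mul 2),
            integral_const_mul, integral_const_mul, husq_int, husq_int]
          ring
  -- integrability of g N
  have hgN_int : ∀ N : ℕ, Integrable (g N) volume := by
    intro N
    rw [hg]
    exact integrable_finset_sum _ fun j _ => hfa ((j : ℝ) * T)
  -- the ball and its complement
  set s : ℕ → Set ℝ := fun N => Metric.closedBall (0 : ℝ) (2 * N * T) with hs
  have hs_meas : ∀ N, MeasurableSet (s N) := fun N => measurableSet_closedBall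
  have hs_vol : ∀ N : ℕ, (volume (s N)).toReal = 4 * N * T := by
    intro N
    rw [hs]
    simp only [Real.volume_closedBall]
    rw [ENNReal.toReal_ofReal (by positivity)]
    ring
  -- Cauchy–Schwarz estimate on the ball
  have hball : ∀ N : ℕ, (∫ x in s N, ‖w N x‖)
      ≤ Real.sqrt (4 * U) * Real.sqrt (4 * N * T) := by
    intro N
    haveI : IsFiniteMeasure (volume.restrict (s N)) := by
      constructor
      rw [Measure.restrict_apply_univ]
      exact measure_closedBall_lt_top
    have hconj : Real.HolderConjugate 2 2 := Real.HolderConjugate.two_two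
    have h2e : ENNReal.ofReal (2 : ℝ) = 2 := by
      norm_num [ENNReal.ofReal_ofNat]
    have hwn : MemLp (fun x => ‖w N x‖) (ENNReal.ofReal (2 : ℝ)) (volume.restrict (s N)) := by
      rw [h2e]; exact ((hw2 N).norm).restrict (s N)
    have h1m : MemLp (fun _ : ℝ => (1 : ℝ)) (ENNReal.ofReal (2 : ℝ)) (volume.restrict (s N)) :=
      memLp_const 1
    have hH := integral_mul_le_Lp_mul_Lq_of_nonneg hconj
      (Filter.Eventually.of_forall fun x => norm_nonneg (w N x))
      (Filter.Eventually.of_forall fun _ => zero_le_one) hwn h1m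
    simp only [mul_one] at hH
    have hsq_eq : (∫ a in s N, ‖w N a‖ ^ (2 : ℝ)) = ∫ a in s N, ‖w N a‖ ^ 2 := by
      refine integral_congr_ae (Filter.Eventually.of_forall fun a => ?_)
      show ‖w N a‖ ^ (2:ℝ) = ‖w N a‖ ^ 2
      rw [show (2:ℝ) = ((2:ℕ):ℝ) by norm_num, Real.rpow_natCast]
    have hconst : (∫ _ in s N, (1 : ℝ) ^ (2 : ℝ)) = 4 * N * T := by
      simp only [Real.one_rpow]
      rw [setIntegral_const, smul_eq_mul, mul_one]; exact hs_vol N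
    calc (∫ x in s N, ‖w N x‖)
        ≤ (∫ a in s N, ‖w N a‖ ^ (2 : ℝ)) ^ ((1:ℝ)/2) * (∫ _ in s N, (1:ℝ) ^ (2:ℝ)) ^ ((1:ℝ)/2) :=
          hH
      _ ≤ (4 * U) ^ ((1:ℝ)/2) * (4 * N * T) ^ ((1:ℝ)/2) := by
          rw [hsq_eq, hconst]
          have hfirst : (∫ a in s N, ‖w N a‖ ^ 2) ^ ((1:ℝ)/2) ≤ (4 * U) ^ ((1:ℝ)/2) := by
            apply Real.rpow_le_rpow
            · exact setIntegral_nonneg (hs_meas N) fun x _ => sq_nonneg _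
            · exact le_trans (setIntegral_le_integral (hwsq N)
                (Filter.Eventually.of_forall fun x => sq_nonneg _)) (hwsq_le N)
            · norm_num
          exact mul_le_mul_of_nonneg_right hfirst (Real.rpow_nonneg (by positivity) _)
      _ = Real.sqrt (4 * U) * Real.sqrt (4 * N * T) := by
          rw [Real.sqrt_eq_rpow, Real.sqrt_eq_rpow]
  -- tail estimate
  set ε : ℕ → ℝ := fun N => ∫ y in (Metric.ball (0 : ℝ) ((N : ℝ) * T))ᶜ, ‖f y‖ with hε
  have hε_nonneg : ∀ N, 0 ≤ ε N := fun N =>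
    setIntegral_nonneg (measurableSet_ball.compl) fun x _ => norm_nonneg _
  have htail : ∀ N : ℕ, (∫ x in (s N)ᶜ, ‖g N x‖) ≤ N * ε N := by
    intro N
    have hterm : ∀ j ∈ Finset.range N, (∫ x in (s N)ᶜ, ‖f (x + (j : ℝ) * T)‖) ≤ ε N := by
      intro j hj
      have hmp := measurePreserving_add_right (volume : Measure ℝ) ((j : ℝ) * T)
      have hemb := (MeasurableEquiv.addRight ((j : ℝ) * T)).measurableEmbedding
      have hpre : (fun x : ℝ => x + (j : ℝ) * T) ⁻¹' {y : ℝ | y - (j : ℝ) * T ∈ (s N)ᶜ}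
          = (s N)ᶜ := by
        ext x
        simp only [Set.mem_preimage, Set.mem_setOf_eq, add_sub_cancel_right]
      have hchg : (∫ x in (s N)ᶜ, ‖f (x + (j : ℝ) * T)‖)
          = ∫ y in {y : ℝ | y - (j : ℝ) * T ∈ (s N)ᶜ}, ‖f y‖ := by
        have h5 := hmp.setIntegral_preimage_emb (by simpa using hemb) (fun y => ‖f y‖)
          {y : ℝ | y - (j : ℝ) * T ∈ (s N)ᶜ}
        rw [hpre] at h5
        exact h5
      rw [hchg, hε]
      refine setIntegral_mono_set hf1.norm.integrableOn
        (Filter.Eventually.of_forall fun y => norm_nonneg _)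
        (HasSubset.Subset.eventuallyLE ?_)
      intro y hy
      simp only [Set.mem_setOf_eq, hs, Set.mem_compl_iff, Metric.mem_closedBall,
        Real.dist_eq, sub_zero, not_le] at hy
      simp only [Set.mem_compl_iff, Metric.mem_ball, Real.dist_eq, sub_zero, not_lt]
      have hjN : (j : ℝ) + 1 ≤ (N : ℝ) := by
        have := Finset.mem_range.mp hj
        exact_mod_cast Nat.succ_le_of_lt this
      have habs : |y - (j : ℝ) * T| ≤ |y| + |(j : ℝ) * T| := abs_sub _ _
      have hjT : |(j : ℝ) * T| = (j : ℝ) * T := abs_of_nonneg (by positivity)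
      have hjT2 : (j : ℝ) * T ≤ ((N : ℝ) - 1) * T :=
        mul_le_mul_of_nonneg_right (by linarith) hT.le
      linarith
    calc (∫ x in (s N)ᶜ, ‖g N x‖)
        ≤ ∫ x in (s N)ᶜ, ∑ j ∈ Finset.range N, ‖f (x + (j : ℝ) * T)‖ := by
          refine integral_mono ((hgN_int N).norm).integrableOn
            (integrable_finset_sum _ fun j _ => (hfa _).norm).integrableOn fun x => ?_
          rw [hg]
          exact norm_sum_le _ _
      _ = ∑ j ∈ Finset.range N, ∫ x in (s N)ᶜ, ‖f (x + (j : ℝ) * T)‖ :=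
          integral_finset_sum _ fun j _ => ((hfa _).norm).integrableOn
      _ ≤ ∑ _ ∈ Finset.range N, ε N := Finset.sum_le_sum hterm
      _ = N * ε N := by rw [Finset.sum_const, Finset.card_range, nsmul_eq_mul]
  have hε_to : Filter.Tendsto ε Filter.atTop (nhds 0) := by
    have hmono : Monotone fun N : ℕ => Metric.ball (0 : ℝ) ((N : ℝ) * T) := by
      intro a b hab
      exact Metric.ball_subset_ball (mul_le_mul_of_nonneg_right (by exact_mod_cast hab) hT.le)
    have hunion : (⋃ N : ℕ, Metric.ball (0 : ℝ) ((N : ℝ) * T)) = Set.univ := by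
      ext y
      simp only [Set.mem_iUnion, Metric.mem_ball, Real.dist_eq, sub_zero, Set.mem_univ, iff_true]
      obtain ⟨N, hN⟩ := exists_nat_gt (|y| / T)
      exact ⟨N, by rwa [div_lt_iff₀ hT] at hN⟩
    have hball_to : Filter.Tendsto (fun N : ℕ => ∫ y in Metric.ball (0 : ℝ) ((N : ℝ) * T), ‖f y‖)
        Filter.atTop (nhds (∫ y in ⋃ N : ℕ, Metric.ball (0 : ℝ) ((N : ℝ) * T), ‖f y‖)) :=
      tendsto_setIntegral_of_monotone (fun N => measurableSet_ball) hmono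
        (by rw [hunion]; exact hf1.norm.integrableOn)
    rw [hunion] at hball_to
    have hdec : ∀ N : ℕ, ε N = (∫ y : ℝ, ‖f y‖) - ∫ y in Metric.ball (0 : ℝ) ((N : ℝ) * T), ‖f y‖ := by
      intro N
      have hsplit := integral_add_compl
        (measurableSet_ball : MeasurableSet (Metric.ball (0 : ℝ) ((N : ℝ) * T))) hf1.norm
      rw [hε]
      simp only
      linarith [hsplit]
    have h0 : Filter.Tendsto
        (fun N : ℕ => (∫ y : ℝ, ‖f y‖) - ∫ y in Metric.ball (0 : ℝ) ((N : ℝ) * T), ‖f y‖)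
        Filter.atTop (nhds 0) := by
      have := (tendsto_const_nhds (x := ∫ y : ℝ, ‖f y‖) (f := Filter.atTop (α := ℕ))).sub hball_to
      simpa [Measure.restrict_univ] using this
    exact h0.congr fun N => (hdec N).symm
  -- assembling the bound
  set D : ℝ := Real.sqrt (4 * U) * Real.sqrt (4 * T) with hD
  have hbound : ∀ N : ℕ, 1 ≤ N → ‖c‖ ≤ D / Real.sqrt N + ε N := by
    intro N hN
    have hNpos : (0 : ℝ) < N := by exact_mod_cast hN
    have hnorm : (N : ℝ) * ‖c‖ = ‖∫ x : ℝ, g N x * e x‖ := by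
      rw [hkey N, norm_mul, Complex.norm_natCast]
    have h1 : ‖∫ x : ℝ, g N x * e x‖ ≤ ∫ x : ℝ, ‖g N x‖ := by
      calc ‖∫ x : ℝ, g N x * e x‖ ≤ ∫ x : ℝ, ‖g N x * e x‖ := norm_integral_le_integral_norm _
        _ = ∫ x : ℝ, ‖g N x‖ := integral_congr_ae (Filter.Eventually.of_forall fun x => by
            simp only [norm_mul, he_norm, mul_one])
    have hsplit : (∫ x : ℝ, ‖g N x‖) = (∫ x in s N, ‖g N x‖) + ∫ x in (s N)ᶜ, ‖g N x‖ :=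
      (integral_add_compl (hs_meas N) (hgN_int N).norm).symm
    have hball' : (∫ x in s N, ‖g N x‖) = ∫ x in s N, ‖w N x‖ :=
      integral_congr_ae (ae_restrict_of_ae ((hgw N).mono fun x hx => by simp only [hx]))
    have hDsq : Real.sqrt (4 * U) * Real.sqrt (4 * N * T) = D * Real.sqrt N := by
      rw [hD, show 4 * (N : ℝ) * T = (4 * T) * N by ring,
        Real.sqrt_mul (by positivity) ((N : ℝ))]
      ring
    have hNc : (N : ℝ) * ‖c‖ ≤ D * Real.sqrt N + N * ε N := by
      rw [hnorm, ← hDsq]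
      calc ‖∫ x : ℝ, g N x * e x‖ ≤ ∫ x : ℝ, ‖g N x‖ := h1
        _ = (∫ x in s N, ‖g N x‖) + ∫ x in (s N)ᶜ, ‖g N x‖ := hsplit
        _ ≤ Real.sqrt (4 * U) * Real.sqrt (4 * N * T) + N * ε N := by
            refine add_le_add ?_ (htail N)
            rw [hball']
            exact hball N
    rw [← mul_le_mul_iff_right₀ hNpos]
    have hexp : (N : ℝ) * (D / Real.sqrt N + ε N) = D * Real.sqrt N + N * ε N := by
      have h2 : (N : ℝ) / Real.sqrt N = Real.sqrt N := Real.div_sqrt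
      calc (N : ℝ) * (D / Real.sqrt N + ε N) = D * ((N : ℝ) / Real.sqrt N) + N * ε N := by ring
        _ = D * Real.sqrt N + N * ε N := by rw [h2]
    rw [hexp]
    exact hNc
  have hlim : Filter.Tendsto (fun N : ℕ => D / Real.sqrt N + ε N) Filter.atTop (nhds 0) := by
    have h1 : Filter.Tendsto (fun N : ℕ => Real.sqrt N) Filter.atTop Filter.atTop := by
      have := (tendsto_rpow_atTop (by norm_num : (0:ℝ) < 1/2)).comp
        (tendsto_natCast_atTop_atTop (R := ℝ))
      refine this.congr fun N => ?_
      rw [Function.comp_apply, Real.sqrt_eq_rpow]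
    have h2 : Filter.Tendsto (fun N : ℕ => D / Real.sqrt N) Filter.atTop (nhds 0) :=
      Filter.Tendsto.div_atTop tendsto_const_nhds h1
    simpa using h2.add hε_to
  have hfinal : ‖c‖ ≤ 0 :=
    ge_of_tendsto hlim (Filter.eventually_atTop.mpr ⟨1, fun N hN => hbound N hN⟩)
  have : c = 0 := by
    have := norm_nonneg c
    have hc0 : ‖c‖ = 0 := le_antisymm hfinal this
    exact norm_eq_zero.mp hc0
  exact this
end

section
/- Let ν ≥ 1 be real, T > 0, and let f and u be holomorphic functions on the upper half-plane ℍ = {z ∈ ℂ : Im z > 0} with ∫_ℍ |f(x+iy)|² y^{ν−1} dx dy < ∞ and ∫_ℍ |u(x+iy)|² y^{ν−1} dx dy < ∞. Suppose f(·+iy) ∈ L¹(ℝ) for every y > 0, and f(z) = u(z−T) − u(z) for all z ∈ ℍ. Then for almost every y > 0 and every integer k, ∫_ℝ f(x+iy) e^{−2πi(k/T)x} dx = 0. -/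
open MeasureTheory Complex

open Filter Set

private lemma aux_eps {S A : ℕ → ℝ} {C : ℝ} (hC : 0 < C) (hS : ∀ n, 0 ≤ S n)
    (hb : ∀ δ : ℝ, 0 < δ → ∀ n, S n ≤ δ * C + A n / δ)
    (hA : Tendsto A atTop (nhds 0)) : Tendsto S atTop (nhds 0) := by
  rw [Metric.tendsto_atTop] at hA ⊢
  intro ε hε
  have hδ : 0 < ε / (2 * C) := by positivity
  set δ := ε / (2 * C) with hδdef
  obtain ⟨N, hN⟩ := hA (δ * (ε / 2)) (by positivity)
  refine ⟨N, fun n hn => ?_⟩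
  have h1 : A n < δ * (ε / 2) := by
    have := hN n hn
    rw [Real.dist_eq, sub_zero] at this
    exact (le_abs_self _).trans_lt this
  have h2 : A n / δ < ε / 2 := by
    rw [div_lt_iff₀ hδ]; linarith
  have h3 : δ * C = ε / 2 := by
    rw [hδdef]; field_simp
  rw [Real.dist_eq, sub_zero, _root_.abs_of_nonneg (hS n)]
  have := hb δ hδ n
  linarith

private lemma aux_top {w : ℝ → ℝ} (hw : Integrable w) {a b : ℕ → ℝ}
    (ha : Tendsto a atTop atTop) (hb : Tendsto b atTop atTop) :
    Tendsto (fun n => ∫ x in a n..b n, w x) atTop (nhds 0) := by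
  have h1 := intervalIntegral_tendsto_integral_Ioi 0 hw.integrableOn hb
  have h2 := intervalIntegral_tendsto_integral_Ioi 0 hw.integrableOn ha
  have h3 := h1.sub h2
  rw [sub_self] at h3
  refine h3.congr fun n => ?_
  exact intervalIntegral.integral_interval_sub_left hw.intervalIntegrable hw.intervalIntegrable

private lemma aux_bot {w : ℝ → ℝ} (hw : Integrable w) {a b : ℕ → ℝ}
    (ha : Tendsto a atTop atBot) (hb : Tendsto b atTop atBot) :
    Tendsto (fun n => ∫ x in a n..b n, w x) atTop (nhds 0) := by
  have h1 := intervalIntegral_tendsto_integral_Iic 0 hw.integrableOn ha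
  have h2 := intervalIntegral_tendsto_integral_Iic 0 hw.integrableOn hb
  have h3 := h1.sub h2
  rw [sub_self] at h3
  refine h3.congr fun n => ?_
  have h4 := intervalIntegral.integral_add_adjacent_intervals
    (hw.intervalIntegrable (a := a n) (b := b n)) (hw.intervalIntegrable (a := b n) (b := 0))
  linarith

private lemma bnd_tendsto (T : ℝ) (hT : 0 < T) (g e : ℝ → ℂ)
    (hgc : Continuous g) (hec : Continuous e) (hen : ∀ x, ‖e x‖ = 1)
    {a : ℕ → ℝ}
    (hA : Tendsto (fun n => ∫ x in (a n - T)..(a n), ‖g x‖ ^ 2) atTop (nhds 0)) :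
    Tendsto (fun n => ∫ x in (a n - T)..(a n), g x * e x) atTop (nhds 0) := by
  have hab : ∀ n, a n - T ≤ a n := fun n => by linarith
  apply squeeze_zero_norm (a := fun n => ∫ x in (a n - T)..(a n), ‖g x‖)
  · intro n
    calc ‖∫ x in (a n - T)..(a n), g x * e x‖
        ≤ ∫ x in (a n - T)..(a n), ‖g x * e x‖ :=
          intervalIntegral.norm_integral_le_integral_norm (hab n)
      _ = ∫ x in (a n - T)..(a n), ‖g x‖ := by
          apply intervalIntegral.integral_congr
          intro x _
          simp [hen x]
  · -- S n := ∫ ‖g‖ → 0 via aux_eps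
    apply aux_eps (A := fun n => ∫ x in (a n - T)..(a n), ‖g x‖ ^ 2) hT
    · intro n
      apply intervalIntegral.integral_nonneg (hab n)
      intro x _; exact norm_nonneg _
    · intro δ hδ n
      have hpt : ∀ x : ℝ, ‖g x‖ ≤ δ + ‖g x‖ ^ 2 / δ := by
        intro x
        have h0 := norm_nonneg (g x)
        have hkey : δ * ‖g x‖ ≤ δ * δ + ‖g x‖ ^ 2 := by
          nlinarith [sq_nonneg (δ - ‖g x‖)]
        calc ‖g x‖ = (δ * ‖g x‖) / δ := by field_simp
          _ ≤ (δ * δ + ‖g x‖ ^ 2) / δ := by gcongr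
          _ = δ + ‖g x‖ ^ 2 / δ := by field_simp
      calc (∫ x in (a n - T)..(a n), ‖g x‖)
          ≤ ∫ x in (a n - T)..(a n), (δ + ‖g x‖ ^ 2 / δ) := by
            apply intervalIntegral.integral_mono_on (hab n)
            · exact (hgc.norm).intervalIntegrable _ _
            · exact (continuous_const.add (((hgc.norm).pow 2).div_const δ)).intervalIntegrable _ _
            · intro x _; exact hpt x
        _ = δ * T + (∫ x in (a n - T)..(a n), ‖g x‖ ^ 2) / δ := by
            rw [intervalIntegral.integral_add (g := fun x => ‖g x‖ ^ 2 / δ) ((continuous_const (y := δ)).intervalIntegrable _ _)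
              ((((hgc.norm).pow 2).div_const δ : Continuous (fun x => ‖g x‖ ^ 2 / δ)).intervalIntegrable _ _),
              intervalIntegral.integral_const, intervalIntegral.integral_div]
            simp only [smul_eq_mul]
            ring
    · exact hA

private lemma key (T : ℝ) (hT : 0 < T) (k : ℤ) (g h : ℝ → ℂ)
    (hgc : Continuous g) (hhc : Continuous h)
    (hg2 : Integrable (fun x => ‖g x‖ ^ 2)) (hh : Integrable h)
    (hgh : ∀ x : ℝ, h x = g (x - T) - g x) :
    ∫ x : ℝ, h x * Complex.exp (-2 * Real.pi * I * ((k : ℝ) / T) * x) = 0 := by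
  set e : ℝ → ℂ := fun x : ℝ => Complex.exp (-2 * Real.pi * I * ((k : ℝ) / T) * x) with he
  have he_cont : Continuous e := by
    apply Complex.continuous_exp.comp
    continuity
  have he_norm : ∀ x : ℝ, ‖e x‖ = 1 := by
    intro x
    have harg : (-2 * (Real.pi : ℂ) * I * (((k : ℝ) : ℂ) / (T : ℂ)) * (x : ℂ))
        = ((-2 * Real.pi * ((k : ℝ) / T) * x : ℝ) : ℂ) * I := by
      push_cast; ring
    simp only [he]
    rw [harg, Complex.norm_exp_ofReal_mul_I]
  have he_per : ∀ x : ℝ, e (x + T) = e x := by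
    intro x
    have hT0 : (T : ℂ) ≠ 0 := by exact_mod_cast hT.ne'
    have harg : (-2 * (Real.pi : ℂ) * I * (((k : ℝ) : ℂ) / (T : ℂ)) * ((x + T : ℝ) : ℂ))
        = -2 * (Real.pi : ℂ) * I * (((k : ℝ) : ℂ) / (T : ℂ)) * (x : ℂ)
          + ((-k : ℤ) : ℂ) * (2 * (Real.pi : ℂ) * I) := by
      push_cast
      field_simp
      ring
    simp only [he]
    rw [harg, Complex.exp_add, Complex.exp_int_mul_two_pi_mul_I, mul_one]
  have hhe : Integrable (fun x : ℝ => h x * e x) := by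
    have := hh.bdd_mul he_cont.aestronglyMeasurable (c := 1) (Filter.Eventually.of_forall fun x => (he_norm x).le)
    simpa [mul_comm] using this
  have htop : Tendsto (fun n : ℕ => (n : ℝ) * T) atTop atTop :=
    tendsto_natCast_atTop_atTop.atTop_mul_const hT
  have hbot : Tendsto (fun n : ℕ => -((n : ℝ) * T)) atTop atBot :=
    tendsto_neg_atTop_atBot.comp htop
  have hmain : Tendsto (fun n : ℕ => ∫ x in (-((n : ℝ) * T))..((n : ℝ) * T), h x * e x)
      atTop (nhds (∫ x : ℝ, h x * e x)) :=
    intervalIntegral_tendsto_integral hhe hbot htop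
  have hint : ∀ p q : ℝ, IntervalIntegrable (fun x => g x * e x) volume p q :=
    fun p q => (hgc.mul he_cont).intervalIntegrable p q
  have hiden : ∀ n : ℕ, (∫ x in (-((n : ℝ) * T))..((n : ℝ) * T), h x * e x)
      = (∫ x in (-((n : ℝ) * T) - T)..(-((n : ℝ) * T)), g x * e x)
        - ∫ x in ((n : ℝ) * T - T)..((n : ℝ) * T), g x * e x := by
    intro n
    set a := -((n : ℝ) * T) with ha
    set b := (n : ℝ) * T with hb
    have hint2 : IntervalIntegrable (fun x => g (x - T) * e x) volume a b := by
      apply Continuous.intervalIntegrable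
      exact (hgc.comp (continuous_id.sub continuous_const)).mul he_cont
    have hshift : (∫ x in a..b, g (x - T) * e x) = ∫ x in (a - T)..(b - T), g x * e x := by
      have h1 : (∫ x in a..b, g (x - T) * e x)
          = ∫ x in a..b, (fun t => g t * e t) (x - T) := by
        apply intervalIntegral.integral_congr
        intro x _
        simp only
        have hx : x - T + T = x := by ring
        rw [← he_per (x - T), hx]
      rw [h1, intervalIntegral.integral_comp_sub_right (fun t => g t * e t) T]
    have hsplit1 : (∫ x in (a - T)..(b - T), g x * e x)
        = (∫ x in (a - T)..a, g x * e x) + ∫ x in a..(b - T), g x * e x :=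
      (intervalIntegral.integral_add_adjacent_intervals (hint _ _) (hint _ _)).symm
    have hsplit2 : (∫ x in a..b, g x * e x)
        = (∫ x in a..(b - T), g x * e x) + ∫ x in (b - T)..b, g x * e x :=
      (intervalIntegral.integral_add_adjacent_intervals (hint _ _) (hint _ _)).symm
    calc (∫ x in a..b, h x * e x)
        = ∫ x in a..b, (g (x - T) * e x - g x * e x) := by
          apply intervalIntegral.integral_congr
          intro x _
          simp only
          rw [hgh x]; ring
      _ = (∫ x in a..b, g (x - T) * e x) - ∫ x in a..b, g x * e x :=
          intervalIntegral.integral_sub hint2 (hint _ _)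
      _ = (∫ x in (a - T)..a, g x * e x) - ∫ x in (b - T)..b, g x * e x := by
          rw [hshift, hsplit1, hsplit2]; ring
  have hL : Tendsto (fun n : ℕ => ∫ x in (-((n : ℝ) * T) - T)..(-((n : ℝ) * T)), g x * e x)
      atTop (nhds 0) := by
    apply bnd_tendsto T hT g e hgc he_cont he_norm
    exact aux_bot (hg2) (by
      have : Tendsto (fun n : ℕ => -((n : ℝ) * T) - T) atTop atBot :=
        (tendsto_atBot_add_const_right _ (-T) hbot).congr (fun n => by ring)
      exact this) hbot
  have hR : Tendsto (fun n : ℕ => ∫ x in ((n : ℝ) * T - T)..((n : ℝ) * T), g x * e x)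
      atTop (nhds 0) := by
    apply bnd_tendsto T hT g e hgc he_cont he_norm
    exact aux_top (hg2) (by
      have : Tendsto (fun n : ℕ => (n : ℝ) * T - T) atTop atTop :=
        (tendsto_atTop_add_const_right _ (-T) htop).congr (fun n => by ring)
      exact this) htop
  have hzero : Tendsto (fun n : ℕ => ∫ x in (-((n : ℝ) * T))..((n : ℝ) * T), h x * e x)
      atTop (nhds 0) := by
    have := hL.sub hR
    rw [sub_zero] at this
    exact this.congr fun n => (hiden n).symm
  exact tendsto_nhds_unique hmain hzero

/-- Discrete-series setting: if `f, u` are holomorphic on the upper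
half-plane, square-integrable with respect to `y^{ν−1} dx dy` (for some real `ν ≥ 1`),
`f(·+iy) ∈ L¹(ℝ)` for every `y > 0`, and `f(z) = u(z−T) − u(z)` for all `z` in the upper
half-plane, then for almost every `y > 0` and every integer `k`,
`∫ f(x+iy) e^{−2πi(k/T)x} dx = 0`. -/
theorem stmt_1 (ν T : ℝ) (hν : 1 ≤ ν) (hT : 0 < T) (f u : ℂ → ℂ)
    (hf : DifferentiableOn ℂ f {z : ℂ | 0 < z.im})
    (hu : DifferentiableOn ℂ u {z : ℂ | 0 < z.im})
    (hfL2 : IntegrableOn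
      (fun p : ℝ × ℝ => ‖f (p.1 + p.2 * I)‖ ^ 2 * p.2 ^ (ν - 1))
      (Set.univ ×ˢ Set.Ioi (0 : ℝ)))
    (huL2 : IntegrableOn
      (fun p : ℝ × ℝ => ‖u (p.1 + p.2 * I)‖ ^ 2 * p.2 ^ (ν - 1))
      (Set.univ ×ˢ Set.Ioi (0 : ℝ)))
    (hfL1 : ∀ y : ℝ, 0 < y → Integrable (fun x : ℝ => f (x + y * I)))
    (heq : ∀ z : ℂ, 0 < z.im → f z = u (z - T) - u z) :
    ∀ᵐ y : ℝ ∂(volume.restrict (Set.Ioi (0 : ℝ))), ∀ k : ℤ,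
      (∫ x : ℝ, f (x + y * I) *
        Complex.exp (-2 * Real.pi * I * ((k : ℝ) / T) * x)) = 0 := by
  have hmeas : volume.prod (volume.restrict (Set.Ioi (0 : ℝ)))
      = ((volume : Measure (ℝ × ℝ))).restrict (Set.univ ×ˢ Set.Ioi (0 : ℝ)) := by
    rw [Measure.volume_eq_prod, ← Measure.prod_restrict, Measure.restrict_univ]
  have huL2' : Integrable (fun p : ℝ × ℝ => ‖u (p.1 + p.2 * I)‖ ^ 2 * p.2 ^ (ν - 1))
      (volume.prod (volume.restrict (Set.Ioi (0 : ℝ)))) := by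
    rw [hmeas]; exact huL2
  have hae := huL2'.prod_left_ae
  filter_upwards [hae, ae_restrict_mem measurableSet_Ioi] with y hy hymem
  intro k
  have hy0 : (0 : ℝ) < y := hymem
  have him : ∀ x : ℝ, ((x : ℂ) + (y : ℂ) * I).im = y := by
    intro x; simp
  have hmem : ∀ x : ℝ, ((x : ℂ) + (y : ℂ) * I) ∈ {z : ℂ | 0 < z.im} := by
    intro x; simp only [Set.mem_setOf_eq, him]; exact hy0
  have hφ : Continuous (fun x : ℝ => (x : ℂ) + (y : ℂ) * I) :=
    Complex.continuous_ofReal.add continuous_const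
  have hgc : Continuous (fun x : ℝ => u ((x : ℂ) + (y : ℂ) * I)) :=
    hu.continuousOn.comp_continuous hφ hmem
  have hhc : Continuous (fun x : ℝ => f ((x : ℂ) + (y : ℂ) * I)) :=
    hf.continuousOn.comp_continuous hφ hmem
  have hcne : (y : ℝ) ^ (ν - 1) ≠ 0 := (Real.rpow_pos_of_pos hy0 _).ne'
  have hg2 : Integrable (fun x : ℝ => ‖u ((x : ℂ) + (y : ℂ) * I)‖ ^ 2) := by
    have h1 := hy.mul_const ((y ^ (ν - 1))⁻¹)
    have heqfun : (fun x : ℝ => ‖u ((x : ℂ) + (y : ℂ) * I)‖ ^ 2 * y ^ (ν - 1) * (y ^ (ν - 1))⁻¹)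
        = fun x : ℝ => ‖u ((x : ℂ) + (y : ℂ) * I)‖ ^ 2 := by
      funext x; field_simp
    rwa [heqfun] at h1
  have hgh : ∀ x : ℝ, f ((x : ℂ) + (y : ℂ) * I)
      = u (((x - T : ℝ) : ℂ) + (y : ℂ) * I) - u ((x : ℂ) + (y : ℂ) * I) := by
    intro x
    have h2 := heq ((x : ℂ) + (y : ℂ) * I) (by simpa [him x] using hy0)
    have harg : ((x : ℂ) + (y : ℂ) * I) - (T : ℂ) = ((x - T : ℝ) : ℂ) + (y : ℂ) * I := by
      push_cast; ring
    rw [h2, harg]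
  exact key T hT k (fun x : ℝ => u ((x : ℂ) + (y : ℂ) * I))
    (fun x : ℝ => f ((x : ℂ) + (y : ℂ) * I)) hgc hhc hg2 (hfL1 y hy0) hgh
end

section
/- Let 0 < ν < 1 and T > 0. Let f ∈ L¹(ℝ) and let u : ℝ → ℂ be measurable, with ∬_{ℝ²} |f(x)||f(y)||x−y|^{ν−1} dx dy < ∞ and ∬_{ℝ²} |u(x)||u(y)||x−y|^{ν−1} dx dy < ∞. If f(x) = u(x−T) − u(x) for almost every x ∈ ℝ, then f̂(k/T) = 0 for every integer k. -/
open MeasureTheory Complex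
open Filter Topology
open scoped ENNReal NNReal

lemma aux_decay (ν : ℝ) (hν0 : 0 < ν) (hν1 : ν < 1) (u : ℝ → ℂ) (hu_meas : Measurable u)
    (hu2 : Integrable
      (fun p : ℝ × ℝ => ‖u p.1‖ * ‖u p.2‖ * |p.1 - p.2| ^ (ν - 1))
      (volume : Measure (ℝ × ℝ))) :
    ∃ A : ℝ, 0 ≤ A ∧ ∀ R : ℝ, 0 < R →
      IntegrableOn (fun x => ‖u x‖) (Metric.closedBall 0 R) volume ∧
      (∫ x in Metric.closedBall (0:ℝ) R, ‖u x‖) ≤ A * Real.sqrt ((2*R) ^ (1-ν)) := by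
  set K : ℝ≥0∞ := ∫⁻ p : ℝ × ℝ,
      (‖u p.1‖₊ : ℝ≥0∞) * (‖u p.2‖₊ : ℝ≥0∞) * ENNReal.ofReal (|p.1 - p.2| ^ (ν - 1)) with hK
  have hg_nonneg : ∀ p : ℝ × ℝ, 0 ≤ ‖u p.1‖ * ‖u p.2‖ * |p.1 - p.2| ^ (ν - 1) := fun p =>
    mul_nonneg (mul_nonneg (norm_nonneg _) (norm_nonneg _)) (Real.rpow_nonneg (abs_nonneg _) _)
  have hKfin : K ≠ ⊤ := by
    have h2 := hu2.hasFiniteIntegral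
    rw [hasFiniteIntegral_iff_ofReal (Filter.Eventually.of_forall hg_nonneg)] at h2
    have : K = ∫⁻ p : ℝ × ℝ, ENNReal.ofReal (‖u p.1‖ * ‖u p.2‖ * |p.1 - p.2| ^ (ν - 1)) := by
      apply lintegral_congr
      intro p
      rw [ENNReal.ofReal_mul (mul_nonneg (norm_nonneg _) (norm_nonneg _)),
        ENNReal.ofReal_mul (norm_nonneg _), ofReal_norm, ofReal_norm, enorm_eq_nnnorm, enorm_eq_nnnorm]
    rw [this]
    exact h2.ne
  refine ⟨Real.sqrt K.toReal, Real.sqrt_nonneg _, fun R hR => ?_⟩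
  set s : Set ℝ := Metric.closedBall (0:ℝ) R with hs
  have hsm : MeasurableSet s := Metric.isClosed_closedBall.measurableSet
  set L : ℝ≥0∞ := ∫⁻ x in s, (‖u x‖₊ : ℝ≥0∞) with hL
  -- diagonal is null
  have hdiag : (volume : Measure (ℝ × ℝ)) {p : ℝ × ℝ | p.1 = p.2} = 0 := by
    have hDm : MeasurableSet {p : ℝ × ℝ | p.1 = p.2} :=
      (isClosed_eq continuous_fst continuous_snd).measurableSet
    rw [MeasureTheory.Measure.volume_eq_prod, MeasureTheory.Measure.prod_apply hDm]
    have : ∀ x : ℝ, (volume : Measure ℝ) (Prod.mk x ⁻¹' {p : ℝ × ℝ | p.1 = p.2}) = 0 := by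
      intro x
      have : Prod.mk x ⁻¹' {p : ℝ × ℝ | p.1 = p.2} = {x} := by
        ext y; simp [eq_comm]
      rw [this]
      exact Real.volume_singleton
    simp [this]
  -- key inequality
  have hmain : ENNReal.ofReal ((2*R) ^ (ν-1)) * (L * L) ≤ K := by
    have hLL : L * L = ∫⁻ p in s ×ˢ s, (‖u p.1‖₊ : ℝ≥0∞) * (‖u p.2‖₊ : ℝ≥0∞) := by
      rw [MeasureTheory.Measure.volume_eq_prod, ← MeasureTheory.Measure.prod_restrict,
        MeasureTheory.lintegral_prod_mul
          (hu_meas.nnnorm.coe_nnreal_ennreal.aemeasurable)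
          (hu_meas.nnnorm.coe_nnreal_ennreal.aemeasurable)]
    calc ENNReal.ofReal ((2*R) ^ (ν-1)) * (L * L)
        = ∫⁻ p in s ×ˢ s,
            ENNReal.ofReal ((2*R) ^ (ν-1)) * ((‖u p.1‖₊ : ℝ≥0∞) * (‖u p.2‖₊ : ℝ≥0∞)) := by
          rw [hLL, MeasureTheory.lintegral_const_mul]
          exact ((hu_meas.nnnorm.coe_nnreal_ennreal.comp measurable_fst).mul
            (hu_meas.nnnorm.coe_nnreal_ennreal.comp measurable_snd))
      _ ≤ ∫⁻ p in s ×ˢ s,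
            (‖u p.1‖₊ : ℝ≥0∞) * (‖u p.2‖₊ : ℝ≥0∞) * ENNReal.ofReal (|p.1 - p.2| ^ (ν - 1)) := by
          apply MeasureTheory.lintegral_mono_ae
          have h1 : ∀ᵐ p : ℝ × ℝ ∂(volume.restrict (s ×ˢ s)), p.1 ≠ p.2 :=
            ae_restrict_of_ae (by
              rw [MeasureTheory.ae_iff]
              simpa using hdiag)
          have h2 : ∀ᵐ p : ℝ × ℝ ∂(volume.restrict (s ×ˢ s)), p ∈ s ×ˢ s :=
            ae_restrict_mem (hsm.prod hsm)
          filter_upwards [h1, h2] with p hne hmem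
          have h1R : |p.1| ≤ R := by
            have := hmem.1
            rwa [hs, Metric.mem_closedBall, Real.dist_eq, sub_zero] at this
          have h2R : |p.2| ≤ R := by
            have := hmem.2
            rwa [hs, Metric.mem_closedBall, Real.dist_eq, sub_zero] at this
          have hd_pos : 0 < |p.1 - p.2| := abs_pos.mpr (sub_ne_zero.mpr hne)
          have hd_le : |p.1 - p.2| ≤ 2 * R := by
            calc |p.1 - p.2| ≤ |p.1| + |p.2| := abs_sub _ _
              _ ≤ 2 * R := by linarith
          have hrpow : (2*R) ^ (ν-1) ≤ |p.1 - p.2| ^ (ν-1) :=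
            Real.rpow_le_rpow_of_nonpos hd_pos hd_le (by linarith)
          rw [mul_comm]
          exact mul_le_mul_right (ENNReal.ofReal_le_ofReal hrpow) _
      _ ≤ K := by
          rw [hK]
          exact MeasureTheory.setLIntegral_le_lintegral _ _
  have h2R : (0:ℝ) < 2*R := by linarith
  have ha : (0:ℝ) < (2*R) ^ (ν-1) := Real.rpow_pos_of_pos h2R _
  set B : ℝ := Real.sqrt K.toReal * Real.sqrt ((2*R) ^ (1-ν)) with hB
  have hBnn : 0 ≤ B := mul_nonneg (Real.sqrt_nonneg _) (Real.sqrt_nonneg _)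
  have hLB : L ≤ ENNReal.ofReal B := by
    have hcan : (ENNReal.ofReal ((2*R) ^ (ν-1)))⁻¹ *
        (ENNReal.ofReal ((2*R) ^ (ν-1)) * (L * L)) = L * L := by
      rw [← mul_assoc, ENNReal.inv_mul_cancel (ENNReal.ofReal_pos.mpr ha).ne'
        ENNReal.ofReal_ne_top, one_mul]
    have h1 : L * L ≤ (ENNReal.ofReal ((2*R) ^ (ν-1)))⁻¹ * K := by
      rw [← hcan]; exact mul_le_mul_right hmain _
    have h2 : (ENNReal.ofReal ((2*R) ^ (ν-1)))⁻¹ * K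
        = ENNReal.ofReal (((2*R) ^ (ν-1))⁻¹ * K.toReal) := by
      rw [ENNReal.ofReal_mul (inv_nonneg.mpr ha.le), ENNReal.ofReal_inv_of_pos ha,
        ENNReal.ofReal_toReal hKfin]
    have h3 : ((2*R) ^ (ν-1))⁻¹ = (2*R) ^ (1-ν) := by
      rw [show (1-ν : ℝ) = -(ν-1) by ring, Real.rpow_neg h2R.le]
    have h4 : B * B = ((2*R) ^ (ν-1))⁻¹ * K.toReal := by
      rw [hB, h3]
      rw [show Real.sqrt K.toReal * Real.sqrt ((2*R) ^ (1-ν)) *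
          (Real.sqrt K.toReal * Real.sqrt ((2*R) ^ (1-ν)))
        = (Real.sqrt K.toReal * Real.sqrt K.toReal) *
          (Real.sqrt ((2*R) ^ (1-ν)) * Real.sqrt ((2*R) ^ (1-ν))) by ring,
        Real.mul_self_sqrt ENNReal.toReal_nonneg,
        Real.mul_self_sqrt (Real.rpow_nonneg h2R.le _)]
      ring
    rw [h2, ← h4, ENNReal.ofReal_mul hBnn] at h1
    by_contra hcon
    push_neg at hcon
    exact absurd h1 (not_le.mpr (ENNReal.mul_lt_mul hcon hcon))
  have hLfin : L < ⊤ := lt_of_le_of_lt hLB ENNReal.ofReal_lt_top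
  have hint : IntegrableOn (fun x => ‖u x‖) s volume := by
    refine ⟨(hu_meas.norm.aestronglyMeasurable).restrict, ?_⟩
    rw [MeasureTheory.hasFiniteIntegral_def]
    have hnn : ∀ x : ℝ, ((‖(‖u x‖)‖₊ : ℝ≥0) : ℝ≥0∞) = ((‖u x‖₊ : ℝ≥0) : ℝ≥0∞) := fun x => by
      rw [nnnorm_norm]
    simp only [enorm_eq_nnnorm]
    rw [lintegral_congr hnn]
    exact hLfin
  refine ⟨hint, ?_⟩
  have heqL : (∫ x in s, ‖u x‖) = L.toReal := by
    rw [hL]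
    rw [MeasureTheory.integral_norm_eq_lintegral_enorm
      (hu_meas.aestronglyMeasurable.restrict)]
    simp only [enorm_eq_nnnorm]
  rw [heqL]
  calc L.toReal ≤ B := ENNReal.toReal_le_of_le_ofReal hBnn hLB
    _ = Real.sqrt K.toReal * Real.sqrt ((2*R) ^ (1-ν)) := rfl


/-- Complementary-series setting: let `0 < ν < 1`, `T > 0`,
`f ∈ L¹(ℝ)` and `u` measurable, both with finite complementary-series norm
`∬ |h(x)||h(y)||x−y|^{ν−1} dx dy < ∞`.  If `f(x) = u(x−T) − u(x)` a.e. then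
`f̂(k/T) = 0` for every integer `k`. -/
theorem stmt_2 (ν T : ℝ) (hν0 : 0 < ν) (hν1 : ν < 1) (hT : 0 < T)
    (f u : ℝ → ℂ)
    (hf1 : Integrable f (volume : Measure ℝ))
    (hu_meas : Measurable u)
    (hf2 : Integrable
      (fun p : ℝ × ℝ => ‖f p.1‖ * ‖f p.2‖ * |p.1 - p.2| ^ (ν - 1))
      (volume : Measure (ℝ × ℝ)))
    (hu2 : Integrable
      (fun p : ℝ × ℝ => ‖u p.1‖ * ‖u p.2‖ * |p.1 - p.2| ^ (ν - 1))
      (volume : Measure (ℝ × ℝ)))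
    (heq : ∀ᵐ x : ℝ, f x = u (x - T) - u x) :
    ∀ k : ℤ,
      (∫ x : ℝ, f x * Complex.exp (-2 * Real.pi * I * x * ((k : ℝ) / T))) = 0 := by
  intro k
  set E : ℝ → ℂ := fun x : ℝ => Complex.exp (-2 * Real.pi * I * x * ((k : ℝ) / T)) with hE
  set c : ℂ := ∫ x : ℝ, f x * E x with hc
  show c = 0
  -- ‖E x‖ = 1
  have hEnorm : ∀ x : ℝ, ‖E x‖ = 1 := by
    intro x
    rw [hE]
    have harg : (-2 * (Real.pi : ℂ) * I * (x : ℂ) * (((k : ℝ) : ℂ) / (T : ℂ)))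
        = ((-2 * Real.pi * x * ((k : ℝ) / T) : ℝ) : ℂ) * I := by push_cast; ring
    simp only
    rw [harg, Complex.norm_exp_ofReal_mul_I]
  have hEmeas : Measurable E := by
    apply Complex.measurable_exp.comp
    fun_prop
  -- periodicity
  have hEp : ∀ (x : ℝ) (m : ℤ), E (x + (m : ℝ) * T) = E x := by
    intro x m
    rw [hE]
    simp only
    have harg : (-2 * (Real.pi:ℂ) * I * ((x : ℝ) + (m:ℝ)*T : ℝ) * (((k : ℝ):ℂ) / (T:ℂ)))
        = (-2 * (Real.pi:ℂ) * I * (x:ℂ) * (((k : ℝ):ℂ) / (T:ℂ)))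
          + ((-(m * k) : ℤ) : ℂ) * (2 * Real.pi * I) := by
      have hT' : (T : ℂ) ≠ 0 := by exact_mod_cast hT.ne'
      push_cast
      field_simp
      ring
    rw [harg, Complex.exp_add, Complex.exp_int_mul_two_pi_mul_I, mul_one]
  -- multiplying by E preserves integrability
  have hmulE : ∀ g : ℝ → ℂ, Integrable g volume → Integrable (fun x => g x * E x) volume := by
    intro g hg
    have := hg.bdd_mul (c := 1) (hEmeas.aestronglyMeasurable) (Filter.Eventually.of_forall fun x => le_of_eq (hEnorm x))
    simpa [mul_comm] using this
  -- translates of f are integrable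
  have hftrans : ∀ a : ℝ, Integrable (fun x => f (x + a)) volume := by
    intro a
    exact (MeasurePreserving.integrable_comp_emb
      (measurePreserving_add_right volume a)
      (MeasurableEquiv.addRight a).measurableEmbedding).mpr hf1
  -- shifted integrals
  have hshift : ∀ n : ℕ, (∫ x : ℝ, f (x + ((n : ℝ) + 1) * T) * E x) = c := by
    intro n
    have hfun : (fun x : ℝ => f (x + ((n : ℝ) + 1) * T) * E x)
        = fun x : ℝ => f (x + ((n : ℝ) + 1) * T) * E (x + ((n : ℝ) + 1) * T) := by
      funext x
      rw [show ((n : ℝ) + 1) * T = ((n + 1 : ℤ) : ℝ) * T by push_cast; ring, hEp]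
    rw [hfun, hc]
    exact integral_add_right_eq_self (fun y => f y * E y) _
  -- partial sums
  set F : ℕ → ℝ → ℂ := fun N x => ∑ i ∈ Finset.range N, f (x + ((i : ℝ) + 1) * T) with hF
  have hFint : ∀ N : ℕ, Integrable (F N) volume := by
    intro N
    exact integrable_finset_sum _ (fun i _ => hftrans _)
  have hFE : ∀ N : ℕ, (∫ x : ℝ, F N x * E x) = (N : ℂ) * c := by
    intro N
    have h1 : (fun x : ℝ => F N x * E x)
        = fun x : ℝ => ∑ i ∈ Finset.range N, f (x + ((i : ℝ) + 1) * T) * E x := by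
      funext x
      rw [hF]
      simp only
      rw [Finset.sum_mul]
    rw [h1, integral_finset_sum _ (fun i _ => hmulE _ (hftrans _))]
    have h2 : ∀ i ∈ Finset.range N, (∫ x : ℝ, f (x + ((i : ℝ) + 1) * T) * E x) = c :=
      fun i _ => hshift i
    rw [Finset.sum_congr rfl h2, Finset.sum_const, Finset.card_range, nsmul_eq_mul]
  -- a.e. telescoping identity
  have haeN : ∀ N : ℕ, ∀ᵐ x : ℝ, F N x = u x - u (x + (N : ℝ) * T) := by
    intro N
    have hsh : ∀ i : ℕ, ∀ᵐ x : ℝ,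
        f (x + ((i : ℝ) + 1) * T) = u (x + (i : ℝ) * T) - u (x + ((i : ℝ) + 1) * T) := by
      intro i
      have hqmp := (measurePreserving_add_right volume (((i : ℝ) + 1) * T)).quasiMeasurePreserving
      have h := hqmp.tendsto_ae.eventually heq
      filter_upwards [h] with x hx
      rw [hx]
      congr 1
      congr 1
      ring
    have hall : ∀ᵐ x : ℝ, ∀ i : ℕ,
        f (x + ((i : ℝ) + 1) * T) = u (x + (i : ℝ) * T) - u (x + ((i : ℝ) + 1) * T) :=
      MeasureTheory.ae_all_iff.mpr hsh
    filter_upwards [hall] with x hx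
    rw [hF]
    simp only
    have := Finset.sum_range_sub' (f := fun i : ℕ => u (x + (i : ℝ) * T)) (n := N)
    calc (∑ i ∈ Finset.range N, f (x + ((i : ℝ) + 1) * T))
        = ∑ i ∈ Finset.range N, (u (x + (i : ℝ) * T) - u (x + ((i : ℝ) + 1) * T)) := by
          apply Finset.sum_congr rfl
          intro i _
          rw [hx i]
      _ = u x - u (x + (N : ℝ) * T) := by
          rw [show (∑ i ∈ Finset.range N, (u (x + (i : ℝ) * T) - u (x + ((i : ℝ) + 1) * T)))
              = ∑ i ∈ Finset.range N, (u (x + (i : ℝ) * T) - u (x + ((i + 1 : ℕ) : ℝ) * T)) by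
            apply Finset.sum_congr rfl; intro i _; push_cast; ring_nf, this]
          norm_num
  -- decay of u on balls
  obtain ⟨A, hA, hdecay⟩ := aux_decay ν hν0 hν1 u hu_meas hu2
  -- tail of f
  set ε : ℕ → ℝ := fun N => ∫ x in (Metric.closedBall (0:ℝ) ((N:ℝ)*T))ᶜ, ‖f x‖ with hεdef
  -- main inequality
  have hmainineq : ∀ N : ℕ, 1 ≤ N → (N:ℝ) * ‖c‖ ≤
      2 * A * Real.sqrt ((6 * (N:ℝ) * T) ^ (1-ν)) + (N:ℝ) * ε N := by
    intro N hN
    have hN0 : (0:ℝ) < N := by exact_mod_cast hN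
    set RN : ℝ := (N:ℝ) * T with hRN
    have hRNpos : 0 < RN := mul_pos hN0 hT
    set s : Set ℝ := Metric.closedBall (0:ℝ) (2 * RN) with hsdef
    have hsm : MeasurableSet s := Metric.isClosed_closedBall.measurableSet
    have hFnormint : Integrable (fun x => ‖F N x‖) volume := (hFint N).norm
    -- step 1 : N ‖c‖ ≤ ∫ ‖F N‖
    have hstep1 : (N:ℝ) * ‖c‖ ≤ ∫ x : ℝ, ‖F N x‖ := by
      have h1 : (N:ℝ) * ‖c‖ = ‖∫ x : ℝ, F N x * E x‖ := by
        rw [hFE N, norm_mul]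
        norm_num
      rw [h1]
      calc ‖∫ x : ℝ, F N x * E x‖ ≤ ∫ x : ℝ, ‖F N x * E x‖ :=
            norm_integral_le_integral_norm _
        _ = ∫ x : ℝ, ‖F N x‖ := by
            apply integral_congr_ae
            apply Filter.Eventually.of_forall
            intro x
            show ‖F N x * E x‖ = ‖F N x‖
            rw [norm_mul, hEnorm, mul_one]
    -- splitting
    have hsplit : (∫ x : ℝ, ‖F N x‖)
        = (∫ x in s, ‖F N x‖) + ∫ x in sᶜ, ‖F N x‖ :=
      (integral_add_compl hsm hFnormint).symm
    -- ball part
    obtain ⟨hu3int, hu3le⟩ := hdecay (3 * RN) (by linarith)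
    obtain ⟨hu2int, hu2le⟩ := hdecay (2 * RN) (by linarith)
    have hemb := (MeasurableEquiv.addRight RN).measurableEmbedding
    have hP := measurePreserving_add_right volume RN
    have hsub23 : s ⊆ (fun x : ℝ => x + RN) ⁻¹' (Metric.closedBall (0:ℝ) (3 * RN)) := by
      intro x hx
      rw [hsdef, Metric.mem_closedBall, Real.dist_eq, sub_zero] at hx
      rw [Set.mem_preimage, Metric.mem_closedBall, Real.dist_eq, sub_zero]
      rw [abs_le] at hx ⊢
      constructor <;> [linarith [hx.1]; linarith [hx.2]]
    have hshift_int : IntegrableOn (fun x : ℝ => ‖u (x + RN)‖)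
        ((fun x : ℝ => x + RN) ⁻¹' (Metric.closedBall (0:ℝ) (3 * RN))) volume := by
      have h := MeasurePreserving.integrable_comp_emb (g := fun y : ℝ => ‖u y‖)
        (hP.restrict_preimage_emb hemb (Metric.closedBall (0:ℝ) (3 * RN))) hemb
      exact h.mpr hu3int
    have hshift_eq : (∫ x in (fun x : ℝ => x + RN) ⁻¹' (Metric.closedBall (0:ℝ) (3 * RN)),
        ‖u (x + RN)‖) = ∫ y in Metric.closedBall (0:ℝ) (3 * RN), ‖u y‖ :=
      hP.setIntegral_preimage_emb hemb (fun y => ‖u y‖) _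
    have hshift_le : (∫ x in s, ‖u (x + RN)‖) ≤ A * Real.sqrt ((2 * (3 * RN)) ^ (1-ν)) := by
      calc (∫ x in s, ‖u (x + RN)‖)
          ≤ ∫ x in (fun x : ℝ => x + RN) ⁻¹' (Metric.closedBall (0:ℝ) (3 * RN)),
              ‖u (x + RN)‖ := by
            apply setIntegral_mono_set hshift_int
            · exact Filter.Eventually.of_forall (fun x => norm_nonneg _)
            · exact HasSubset.Subset.eventuallyLE hsub23
        _ = ∫ y in Metric.closedBall (0:ℝ) (3 * RN), ‖u y‖ := hshift_eq
        _ ≤ A * Real.sqrt ((2 * (3 * RN)) ^ (1-ν)) := hu3le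
    have hdiff_ae : ∀ᵐ x : ℝ ∂(volume.restrict s), ‖F N x‖ = ‖u x - u (x + RN)‖ := by
      apply ae_restrict_of_ae
      filter_upwards [haeN N] with x hx
      rw [hx, hRN]
    have hdiff_int : IntegrableOn (fun x : ℝ => ‖u x - u (x + RN)‖) s volume :=
      (hFnormint.integrableOn).congr hdiff_ae
    have hshift_int_s : IntegrableOn (fun x : ℝ => ‖u (x + RN)‖) s volume :=
      hshift_int.mono_set hsub23
    have hsum_int : IntegrableOn (fun x : ℝ => ‖u x‖ + ‖u (x + RN)‖) s volume :=
      hu2int.add hshift_int_s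
    have hball : (∫ x in s, ‖F N x‖) ≤ 2 * A * Real.sqrt ((6 * (N:ℝ) * T) ^ (1-ν)) := by
      have hcongr : (∫ x in s, ‖F N x‖) = ∫ x in s, ‖u x - u (x + RN)‖ :=
        integral_congr_ae hdiff_ae
      have hmono : (∫ x in s, ‖u x - u (x + RN)‖) ≤ ∫ x in s, (‖u x‖ + ‖u (x + RN)‖) := by
        apply integral_mono_ae hdiff_int hsum_int
        exact Filter.Eventually.of_forall (fun x => norm_sub_le _ _)
      have hadd : (∫ x in s, (‖u x‖ + ‖u (x + RN)‖))
          = (∫ x in s, ‖u x‖) + ∫ x in s, ‖u (x + RN)‖ :=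
        integral_add hu2int hshift_int_s
      have hsqrt_mono : Real.sqrt ((2 * (2 * RN)) ^ (1-ν))
          ≤ Real.sqrt ((6 * (N:ℝ) * T) ^ (1-ν)) := by
        apply Real.sqrt_le_sqrt
        apply Real.rpow_le_rpow (by linarith) (by rw [hRN]; linarith) (by linarith)
      have h6 : (2 * (3 * RN)) = 6 * (N:ℝ) * T := by rw [hRN]; ring
      calc (∫ x in s, ‖F N x‖) = ∫ x in s, ‖u x - u (x + RN)‖ := hcongr
        _ ≤ ∫ x in s, (‖u x‖ + ‖u (x + RN)‖) := hmono
        _ = (∫ x in s, ‖u x‖) + ∫ x in s, ‖u (x + RN)‖ := hadd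
        _ ≤ A * Real.sqrt ((2 * (2 * RN)) ^ (1-ν))
            + A * Real.sqrt ((2 * (3 * RN)) ^ (1-ν)) := add_le_add hu2le hshift_le
        _ ≤ A * Real.sqrt ((6 * (N:ℝ) * T) ^ (1-ν))
            + A * Real.sqrt ((6 * (N:ℝ) * T) ^ (1-ν)) := by
            rw [h6]
            exact add_le_add (mul_le_mul_of_nonneg_left hsqrt_mono hA) le_rfl
        _ = 2 * A * Real.sqrt ((6 * (N:ℝ) * T) ^ (1-ν)) := by ring
    -- tail part
    have htail : (∫ x in sᶜ, ‖F N x‖) ≤ (N:ℝ) * ε N := by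
      have hterm : ∀ i : ℕ, i ∈ Finset.range N →
          (∫ x in sᶜ, ‖f (x + ((i:ℝ) + 1) * T)‖) ≤ ε N := by
        intro i hi
        have hiN : (i:ℝ) + 1 ≤ N := by
          have := Finset.mem_range.mp hi
          exact_mod_cast Nat.succ_le_of_lt this
        set a : ℝ := ((i:ℝ) + 1) * T with ha
        have ha0 : 0 < a := by
          apply mul_pos _ hT
          positivity
        have haN : a ≤ RN := by
          rw [ha, hRN]
          exact mul_le_mul_of_nonneg_right hiN hT.le
        have hembi := (MeasurableEquiv.addRight a).measurableEmbedding
        have hPi := measurePreserving_add_right volume a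
        have hsubt : sᶜ ⊆ (fun x : ℝ => x + a) ⁻¹' (Metric.closedBall (0:ℝ) RN)ᶜ := by
          intro x hx
          rw [Set.mem_compl_iff, hsdef, Metric.mem_closedBall, Real.dist_eq, sub_zero,
            not_le] at hx
          rw [Set.mem_preimage, Set.mem_compl_iff, Metric.mem_closedBall, Real.dist_eq,
            sub_zero, not_le]
          have h1 : |x| - |a| ≤ |x + a| := by
            have := abs_sub_abs_le_abs_sub x (-a)
            simpa [sub_neg_eq_add] using this
          have h2 : |a| = a := abs_of_pos ha0
          linarith
        have hint_pre : IntegrableOn (fun x : ℝ => ‖f (x + a)‖)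
            ((fun x : ℝ => x + a) ⁻¹' (Metric.closedBall (0:ℝ) RN)ᶜ) volume :=
          ((hftrans a).norm).integrableOn
        calc (∫ x in sᶜ, ‖f (x + a)‖)
            ≤ ∫ x in (fun x : ℝ => x + a) ⁻¹' (Metric.closedBall (0:ℝ) RN)ᶜ,
                ‖f (x + a)‖ := by
              apply setIntegral_mono_set hint_pre
              · exact Filter.Eventually.of_forall (fun x => norm_nonneg _)
              · exact HasSubset.Subset.eventuallyLE hsubt
          _ = ∫ y in (Metric.closedBall (0:ℝ) RN)ᶜ, ‖f y‖ :=
              hPi.setIntegral_preimage_emb hembi (fun y => ‖f y‖) _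
          _ = ε N := by rw [hεdef]
      have hFsum : ∀ᵐ x : ℝ ∂(volume.restrict sᶜ),
          ‖F N x‖ ≤ ∑ i ∈ Finset.range N, ‖f (x + ((i:ℝ) + 1) * T)‖ := by
        apply Filter.Eventually.of_forall
        intro x
        rw [hF]
        exact norm_sum_le _ _
      have hsum_int' : IntegrableOn
          (fun x : ℝ => ∑ i ∈ Finset.range N, ‖f (x + ((i:ℝ) + 1) * T)‖) sᶜ volume :=
        (integrable_finset_sum _ (fun i _ => (hftrans _).norm)).integrableOn
      calc (∫ x in sᶜ, ‖F N x‖)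
          ≤ ∫ x in sᶜ, ∑ i ∈ Finset.range N, ‖f (x + ((i:ℝ) + 1) * T)‖ :=
            integral_mono_ae (hFnormint.integrableOn) hsum_int' hFsum
        _ = ∑ i ∈ Finset.range N, ∫ x in sᶜ, ‖f (x + ((i:ℝ) + 1) * T)‖ :=
            integral_finset_sum _ (fun i _ => ((hftrans _).norm).integrableOn)
        _ ≤ ∑ _i ∈ Finset.range N, ε N := Finset.sum_le_sum hterm
        _ = (N:ℝ) * ε N := by rw [Finset.sum_const, Finset.card_range, nsmul_eq_mul]
    calc (N:ℝ) * ‖c‖ ≤ ∫ x : ℝ, ‖F N x‖ := hstep1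
      _ = (∫ x in s, ‖F N x‖) + ∫ x in sᶜ, ‖F N x‖ := hsplit
      _ ≤ 2 * A * Real.sqrt ((6 * (N:ℝ) * T) ^ (1-ν)) + (N:ℝ) * ε N := add_le_add hball htail
  -- the tail of f tends to zero
  have hε0 : Tendsto ε atTop (𝓝 0) := by
    have hmonoS : Monotone (fun N : ℕ => Metric.closedBall (0:ℝ) ((N:ℝ)*T)) := by
      intro m n hmn
      apply Metric.closedBall_subset_closedBall
      have : (m:ℝ) ≤ (n:ℝ) := by exact_mod_cast hmn
      nlinarith
    have hunion : (⋃ N : ℕ, Metric.closedBall (0:ℝ) ((N:ℝ)*T)) = Set.univ := by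
      ext x
      simp only [Set.mem_iUnion, Metric.mem_closedBall, Real.dist_eq, sub_zero,
        Set.mem_univ, iff_true]
      obtain ⟨N, hNx⟩ := exists_nat_ge (|x| / T)
      refine ⟨N, ?_⟩
      rw [div_le_iff₀ hT] at hNx
      linarith
    have h1 : Tendsto (fun N : ℕ => ∫ x in Metric.closedBall (0:ℝ) ((N:ℝ)*T), ‖f x‖)
        atTop (𝓝 (∫ x : ℝ, ‖f x‖)) := by
      have := tendsto_setIntegral_of_monotone
        (f := fun x : ℝ => ‖f x‖) (μ := volume)
        (s := fun N : ℕ => Metric.closedBall (0:ℝ) ((N:ℝ)*T))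
        (fun i => Metric.isClosed_closedBall.measurableSet) hmonoS
        (by rw [hunion]; exact integrableOn_univ.mpr hf1.norm)
      rwa [hunion, MeasureTheory.setIntegral_univ] at this
    have hεeq : ∀ N : ℕ, ε N = (∫ x : ℝ, ‖f x‖)
        - ∫ x in Metric.closedBall (0:ℝ) ((N:ℝ)*T), ‖f x‖ := by
      intro N
      have := integral_add_compl (Metric.isClosed_closedBall.measurableSet
        (s := Metric.closedBall (0:ℝ) ((N:ℝ)*T))) hf1.norm
      rw [hεdef]
      simp only
      linarith [this]
    have h2 : Tendsto (fun N : ℕ => (∫ x : ℝ, ‖f x‖)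
        - ∫ x in Metric.closedBall (0:ℝ) ((N:ℝ)*T), ‖f x‖) atTop (𝓝 0) := by
      have hconst : Tendsto (fun _ : ℕ => (∫ x : ℝ, ‖f x‖)) atTop (𝓝 (∫ x : ℝ, ‖f x‖)) :=
        tendsto_const_nhds
      simpa using hconst.sub h1
    exact h2.congr (fun N => (hεeq N).symm)
  -- conclude
  set C : ℝ := 2 * A * Real.sqrt ((6*T) ^ (1-ν)) with hC
  have hCnn : 0 ≤ C := by positivity
  have hbound : ∀ N : ℕ, 1 ≤ N → ‖c‖ ≤ C / Real.sqrt N + ε N := by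
    intro N hN
    have hN0 : (0:ℝ) < N := by exact_mod_cast hN
    have hN1 : (1:ℝ) ≤ N := by exact_mod_cast hN
    have hsN0 : (0:ℝ) < Real.sqrt N := Real.sqrt_pos.mpr hN0
    have hkey : 2 * A * Real.sqrt ((6 * (N:ℝ) * T) ^ (1-ν)) ≤ C * Real.sqrt N := by
      have h1 : (6 * (N:ℝ) * T) ^ (1-ν) = (6*T) ^ (1-ν) * (N:ℝ) ^ (1-ν : ℝ) := by
        rw [show 6 * (N:ℝ) * T = (6*T) * (N:ℝ) by ring,
          Real.mul_rpow (by linarith) hN0.le]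
      have h2 : (N:ℝ) ^ (1-ν : ℝ) ≤ (N:ℝ) := by
        nth_rewrite 2 [show (N:ℝ) = (N:ℝ) ^ (1:ℝ) by rw [Real.rpow_one]]
        exact Real.rpow_le_rpow_of_exponent_le hN1 (by linarith)
      have h3 : Real.sqrt ((6 * (N:ℝ) * T) ^ (1-ν))
          ≤ Real.sqrt ((6*T) ^ (1-ν) * (N:ℝ)) := by
        apply Real.sqrt_le_sqrt
        rw [h1]
        exact mul_le_mul_of_nonneg_left h2 (Real.rpow_nonneg (by linarith) _)
      have h4 : Real.sqrt ((6*T) ^ (1-ν) * (N:ℝ))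
          = Real.sqrt ((6*T) ^ (1-ν)) * Real.sqrt N :=
        Real.sqrt_mul (Real.rpow_nonneg (by linarith) _) _
      calc 2 * A * Real.sqrt ((6 * (N:ℝ) * T) ^ (1-ν))
          ≤ 2 * A * (Real.sqrt ((6*T) ^ (1-ν)) * Real.sqrt N) := by
            rw [← h4]
            exact mul_le_mul_of_nonneg_left h3 (by linarith)
        _ = C * Real.sqrt N := by rw [hC]; ring
    have h5 : (N:ℝ) * ‖c‖ ≤ C * Real.sqrt N + (N:ℝ) * ε N :=
      le_trans (hmainineq N hN) (add_le_add hkey le_rfl)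
    have h6 : ‖c‖ ≤ (C * Real.sqrt N + (N:ℝ) * ε N) / (N:ℝ) := by
      rw [le_div_iff₀ hN0]
      linarith [h5]
    have h7 : (C * Real.sqrt N + (N:ℝ) * ε N) / (N:ℝ) = C / Real.sqrt N + ε N := by
      have hsq : Real.sqrt N * Real.sqrt N = (N:ℝ) := Real.mul_self_sqrt hN0.le
      field_simp
      nlinarith [hsq]
    rw [h7] at h6
    exact h6
  have htend : Tendsto (fun N : ℕ => C / Real.sqrt N + ε N) atTop (𝓝 0) := by
    have hsqrt_tendsto : Tendsto (fun N : ℕ => Real.sqrt N) atTop atTop := by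
      have h0 : Tendsto Real.sqrt atTop atTop :=
        (tendsto_rpow_atTop (by norm_num : (0:ℝ) < 1/2)).congr
          (fun x => (Real.sqrt_eq_rpow x).symm)
      exact h0.comp tendsto_natCast_atTop_atTop
    have h1 : Tendsto (fun N : ℕ => C / Real.sqrt N) atTop (𝓝 0) :=
      Filter.Tendsto.div_atTop tendsto_const_nhds hsqrt_tendsto
    simpa using h1.add hε0
  have hle : ‖c‖ ≤ 0 := by
    apply ge_of_tendsto htend
    filter_upwards [Filter.eventually_atTop.mpr ⟨1, fun N hN => hbound N hN⟩] with N h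
    exact h
  have : ‖c‖ = 0 := le_antisymm hle (norm_nonneg _)
  exact norm_eq_zero.mp this
end

section
/- Let T > 0, let s ≥ 1 be an integer, let ν ∈ ℂ with Re ν ≥ 0, let A > 0, and let f ∈ C^s(ℝ) satisfy |f^{(r)}(x)| ≤ A (1+|x|)^{−(s+r+1+Re ν)} for every integer 0 ≤ r ≤ s and all x ∈ ℝ. Assume moreover that f̂(k/T) = 0 for every integer k. Then the series u(x) = Σ_{m=1}^∞ f(x+mT) converges for every x, defines a C^s function satisfying u(x−T) − u(x) = f(x) for all x ∈ ℝ, and there is a constant C > 0 depending only on s such that for every integer 0 ≤ r ≤ s and all x ∈ ℝ: |u^{(r)}(x)| ≤ (C/T) · A · (1+|x|)^{−(s+r+Re ν)}. -/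
open MeasureTheory Complex
open scoped FourierTransform Real

lemma stmt7_sum_rpow_le (a T β : ℝ) (hT : 0 < T) (ha : 0 < a) (hβ : 1 < β) (n : ℕ) :
    ∑ i ∈ Finset.range n, (a + ((i:ℝ) + 1) * T) ^ (-β) ≤ a ^ (1 - β) / (T * (β - 1)) := by
  have hTne : T ≠ 0 := hT.ne'
  have hβne : (1:ℝ) - β ≠ 0 := by linarith
  -- antitone on Icc
  have hanti : AntitoneOn (fun t : ℝ => (a + t * T) ^ (-β)) (Set.Icc (0:ℝ) (0 + n)) := by
    intro p hp q hq hpq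
    have hp0 : 0 ≤ p := hp.1
    have : 0 < a + p * T := by nlinarith
    exact Real.rpow_le_rpow_of_nonpos this (by nlinarith) (by linarith)
  have hsum := hanti.sum_le_integral
  have hint : ∫ t in (0:ℝ)..(0 + n), (a + t * T) ^ (-β) ≤ a ^ (1 - β) / (T * (β - 1)) := by
    have hder : ∀ t ∈ Set.uIcc (0:ℝ) (0 + (n:ℝ)),
        HasDerivAt (fun t : ℝ => (a + t * T) ^ (1 - β) / ((1 - β) * T)) ((a + t * T) ^ (-β)) t := by
      intro t ht
      rw [Set.uIcc_of_le (by positivity)] at ht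
      have ht0 : 0 ≤ t := ht.1
      have hpos : 0 < a + t * T := by nlinarith
      have h1 : HasDerivAt (fun t : ℝ => a + t * T) T t := by
        simpa using ((hasDerivAt_id t).mul_const T).const_add a
      have h2 : HasDerivAt (fun y : ℝ => y ^ (1 - β)) ((1 - β) * (a + t * T) ^ (1 - β - 1)) (a + t * T) :=
        Real.hasDerivAt_rpow_const (Or.inl hpos.ne')
      have h3 := (h2.comp t h1).div_const ((1 - β) * T)
      refine h3.congr_deriv ?_
      rw [show (1:ℝ) - β - 1 = -β by ring]
      field_simp
    have hintg : IntervalIntegrable (fun t : ℝ => (a + t * T) ^ (-β)) volume 0 (0 + (n:ℝ)) := by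
      apply ContinuousOn.intervalIntegrable
      apply ContinuousOn.rpow_const
      · exact (continuous_const.add (continuous_id.mul continuous_const)).continuousOn
      · intro t ht
        rw [Set.uIcc_of_le (by positivity)] at ht
        left
        nlinarith [ht.1]
    rw [intervalIntegral.integral_eq_sub_of_hasDerivAt hder hintg]
    have h4 : (0:ℝ) ≤ (a + (n:ℝ) * T) ^ (1 - β) := Real.rpow_nonneg (by positivity) _
    have h5 : (a + (n:ℝ) * T) ^ (1-β) / ((1-β) * T) - a ^ (1-β) / ((1-β)*T)
        = (a ^ (1-β) - (a + (n:ℝ) * T) ^ (1-β)) / (T * (β - 1)) := by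
      rw [div_sub_div_same, show (1-β)*T = -(T*(β-1)) by ring, div_neg, ← neg_div, neg_sub]
    simp only [zero_mul, zero_add, add_zero] at *
    rw [h5]
    have hd : 0 < T * (β - 1) := by nlinarith
    rw [div_le_div_iff_of_pos_right hd]
    linarith
  calc ∑ i ∈ Finset.range n, (a + ((i:ℝ) + 1) * T) ^ (-β)
      = ∑ i ∈ Finset.range n, (fun t : ℝ => (a + t * T) ^ (-β)) (0 + (i + 1 : ℕ)) := by
        apply Finset.sum_congr rfl; intro i _; push_cast; ring_nf
    _ ≤ ∫ t in (0:ℝ)..(0 + n), (a + t * T) ^ (-β) := hsum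
    _ ≤ a ^ (1 - β) / (T * (β - 1)) := hint

lemma stmt7_summable_rpow_aux {a T β : ℝ} (hT : 0 < T) (ha : 0 < a) (hβ : 1 < β) :
    Summable (fun m : ℕ => (a + ((m:ℝ) + 1) * T) ^ (-β)) :=
  summable_of_sum_range_le (fun m => Real.rpow_nonneg (by positivity) _)
    (stmt7_sum_rpow_le a T β hT ha hβ)

lemma stmt7_tsum_rpow_le {a T β : ℝ} (hT : 0 < T) (ha : 0 < a) (hβ : 1 < β) :
    ∑' m : ℕ, (a + ((m:ℝ) + 1) * T) ^ (-β) ≤ a ^ (1 - β) / (T * (β - 1)) :=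
  Summable.tsum_le_of_sum_range_le (stmt7_summable_rpow_aux hT ha hβ) (stmt7_sum_rpow_le a T β hT ha hβ)

lemma stmt7_rpow_neg_two_eq (z : ℝ) (hz : 0 ≤ z) : z ^ (-(2:ℝ)) = (z ^ 2)⁻¹ := by
  rw [show (-(2:ℝ)) = -((2:ℕ):ℝ) by norm_num, Real.rpow_neg hz, Real.rpow_natCast]

lemma stmt7_key_ineq {x T R y n : ℝ} (hT : 0 < T) (hn : 0 ≤ n) (hxR : |x| ≤ R)
    (hy : n * T - |x| ≤ |y|) :
    (1 + |y|) ^ (-(2:ℝ)) ≤ ((1 + R) * max 1 T⁻¹) ^ 2 * (1 + n) ^ (-(2:ℝ)) := by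
  have h0 : (0:ℝ) ≤ |x| := abs_nonneg x
  have h0y : (0:ℝ) ≤ |y| := abs_nonneg y
  have hR : 0 ≤ R := le_trans h0 hxR
  set M := max 1 T⁻¹ with hMdef
  have hM1 : (1:ℝ) ≤ M := le_max_left _ _
  have hMT : T⁻¹ ≤ M := le_max_right _ _
  have hM0 : (0:ℝ) < M := by linarith
  have hsub : 1 + n * T ≤ (1 + |x|) * (1 + |y|) := by nlinarith
  have main : 1 + n ≤ (1 + R) * M * (1 + |y|) := by
    rcases le_or_gt 1 T with h | h
    · have h1 : 1 + n ≤ 1 + n * T := by nlinarith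
      have h2 : (1 + |x|) * (1 + |y|) ≤ (1 + R) * (1 + |y|) := by nlinarith
      have h3 : (1 + R) * (1 + |y|) ≤ (1 + R) * M * (1 + |y|) := by nlinarith
      linarith
    · have h1 : (1:ℝ) ≤ T⁻¹ := (one_le_inv₀ hT).mpr h.le
      have hTin : T⁻¹ * T = 1 := inv_mul_cancel₀ hT.ne'
      have h2 : 1 + n ≤ T⁻¹ * (1 + n * T) := by nlinarith
      have h3 : T⁻¹ * (1 + n * T) ≤ T⁻¹ * ((1 + |x|) * (1 + |y|)) := by nlinarith
      have h4 : T⁻¹ * ((1 + |x|) * (1 + |y|)) ≤ M * ((1 + R) * (1 + |y|)) := by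
        apply mul_le_mul hMT (by nlinarith) (by positivity) (by linarith)
      linarith [h4, (by ring : M * ((1 + R) * (1 + |y|)) = (1 + R) * M * (1 + |y|))]
  have hKpos : (0:ℝ) < (1 + R) * M := by positivity
  rw [stmt7_rpow_neg_two_eq _ (by linarith), stmt7_rpow_neg_two_eq _ (by linarith),
    show ((1 + R) * M) ^ 2 * ((1 + n) ^ 2)⁻¹ = ((1 + R) * M) ^ 2 / (1 + n) ^ 2 from
      (div_eq_mul_inv _ _).symm,
    inv_eq_one_div, div_le_div_iff₀ (by positivity) (by positivity)]
  have := mul_le_mul main main (by linarith) (by positivity)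
  nlinarith [this]

lemma stmt7_summable_model : Summable (fun m : ℕ => (1 + ((m:ℝ) + 1)) ^ (-(2:ℝ))) := by
  have h : Summable (fun n : ℕ => (n:ℝ) ^ (-(2:ℝ))) :=
    Real.summable_nat_rpow.mpr (by norm_num)
  have h2 := h.comp_injective (add_left_injective 2)
  apply h2.congr
  intro m
  simp only [Function.comp_apply]
  push_cast
  ring_nf

lemma stmt7_summable_model' : Summable (fun m : ℕ => (1 + (m:ℝ)) ^ (-(2:ℝ))) := by
  have h : Summable (fun n : ℕ => (n:ℝ) ^ (-(2:ℝ))) :=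
    Real.summable_nat_rpow.mpr (by norm_num)
  have h2 := h.comp_injective (add_left_injective 1)
  apply h2.congr
  intro m
  simp only [Function.comp_apply]
  push_cast
  ring_nf

lemma stmt7_integrable_of_decay {g : ℝ → ℂ} (hg : Continuous g) {A β : ℝ} (hβ : 1 < β)
    (h : ∀ x, ‖g x‖ ≤ A * (1 + |x|) ^ (-β)) : Integrable g := by
  have h1 : Integrable (fun x : ℝ => A * (1 + ‖x‖) ^ (-β)) :=
    (integrable_one_add_norm (E := ℝ) (by simpa using hβ)).const_mul A
  exact h1.mono' hg.aestronglyMeasurable (ae_of_all _ fun x => by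
    simpa [Real.norm_eq_abs] using h x)

lemma stmt7_decay_two {g : ℝ → ℂ} {A β : ℝ} (hA : 0 ≤ A) (hβ : 2 ≤ β)
    (hdec : ∀ y : ℝ, ‖g y‖ ≤ A * (1 + |y|) ^ (-β)) (y : ℝ) :
    ‖g y‖ ≤ A * (1 + |y|) ^ (-(2:ℝ)) := by
  refine (hdec y).trans (mul_le_mul_of_nonneg_left ?_ hA)
  exact Real.rpow_le_rpow_of_exponent_le (by simp [abs_nonneg]) (by linarith)

lemma stmt7_summable_int_family {g : ℝ → ℂ} {A β : ℝ} (hA : 0 ≤ A) (hβ : 2 ≤ β)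
    (hdec : ∀ y : ℝ, ‖g y‖ ≤ A * (1 + |y|) ^ (-β)) {T : ℝ} (hT : 0 < T) (x : ℝ) :
    Summable fun n : ℤ => g (x + n * T) := by
  set K := ((1 + |x|) * max 1 T⁻¹) ^ 2 with hK
  apply Summable.of_norm
  have hbound : ∀ n : ℤ, ‖g (x + n * T)‖ ≤ A * K * (1 + |(n:ℝ)|) ^ (-(2:ℝ)) := by
    intro n
    have h1 := stmt7_decay_two hA hβ hdec (x + n * T)
    have h2 : (1 + |x + (n:ℝ) * T|) ^ (-(2:ℝ)) ≤ K * (1 + |(n:ℝ)|) ^ (-(2:ℝ)) := by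
      apply stmt7_key_ineq hT (abs_nonneg _) (le_refl |x|)
      have h3 := abs_add_le (x + (n:ℝ) * T) (-x)
      rw [show (x + (n:ℝ) * T) + (-x) = (n:ℝ) * T by ring, abs_neg, abs_mul, abs_of_pos hT] at h3
      linarith
    calc ‖g (x + n * T)‖ ≤ A * (1 + |x + (n:ℝ) * T|) ^ (-(2:ℝ)) := h1
      _ ≤ A * (K * (1 + |(n:ℝ)|) ^ (-(2:ℝ))) := mul_le_mul_of_nonneg_left h2 hA
      _ = A * K * (1 + |(n:ℝ)|) ^ (-(2:ℝ)) := by ring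
  apply Summable.of_nonneg_of_le (fun n => norm_nonneg _) hbound
  -- summability of n : ℤ ↦ A*K*(1+|n|)^(-2)
  apply Summable.mul_left
  apply (Summable.of_nat_of_neg ?_ ?_)
  · apply stmt7_summable_model'.congr; intro m; simp
  · apply stmt7_summable_model'.congr; intro m; simp

lemma stmt7_fourier_eq_of_integral {f : ℝ → ℂ} (ξ : ℝ) :
    𝓕 f ξ = ∫ x : ℝ, f x * Complex.exp (-2 * Real.pi * I * x * ξ) := by
  rw [Real.fourier_real_eq_integral_exp_smul]
  congr 1
  ext v
  rw [smul_eq_mul, mul_comm]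
  congr 1
  push_cast
  ring

lemma stmt7_fourier_iteratedDeriv_eq {s : ℕ} {f : ℝ → ℂ} (hf : ContDiff ℝ s f) {A ε : ℝ} (hε : 0 ≤ ε)
    (hdecay : ∀ r : ℕ, r ≤ s → ∀ x : ℝ,
      ‖iteratedDeriv r f x‖ ≤ A * (1 + |x|) ^ (-((s:ℝ) + r + 1 + ε)))
    {r : ℕ} (hr : r ≤ s) (ξ : ℝ) :
    𝓕 (iteratedDeriv r f) ξ = (2 * Real.pi * I * ξ) ^ r * 𝓕 f ξ := by
  induction r with
  | zero => simp [iteratedDeriv_zero]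
  | succ r ih =>
    have hrlt : r < s := Nat.lt_of_succ_le hr
    have hr' : r ≤ s := hrlt.le
    have hscast : ((r:ℝ) + 1) ≤ (s:ℝ) := by exact_mod_cast hr
    have hβ : ∀ k : ℕ, (1:ℝ) < (s:ℝ) + k + 1 + ε := by
      intro k
      have : (0:ℝ) ≤ k := Nat.cast_nonneg k
      linarith
    have hint_r : Integrable (iteratedDeriv r f) :=
      stmt7_integrable_of_decay (hf.continuous_iteratedDeriv r (by exact_mod_cast hr')) (hβ r)
        (hdecay r hr')
    have hdiff : Differentiable ℝ (iteratedDeriv r f) :=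
      hf.differentiable_iteratedDeriv r (by exact_mod_cast hrlt)
    have hint_r1 : Integrable (iteratedDeriv (r + 1) f) :=
      stmt7_integrable_of_decay (hf.continuous_iteratedDeriv (r + 1) (by exact_mod_cast hr)) (hβ (r + 1))
        (hdecay (r + 1) hr)
    have hd : 𝓕 (deriv (iteratedDeriv r f)) =
        fun ξ : ℝ => (2 * Real.pi * I * ξ) • 𝓕 (iteratedDeriv r f) ξ :=
      Real.fourier_deriv hint_r hdiff (by
        rw [← iteratedDeriv_succ]; exact hint_r1)
    rw [iteratedDeriv_succ, congrFun hd ξ, smul_eq_mul, ih hr', pow_succ]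
    ring

lemma stmt7_poisson_zero {g : ℝ → ℂ} (hg : Continuous g) {A β : ℝ} (hA : 0 ≤ A) (hβ : 2 ≤ β)
    (hdec : ∀ y : ℝ, ‖g y‖ ≤ A * (1 + |y|) ^ (-β)) {T : ℝ} (hT : 0 < T)
    (hF : ∀ n : ℤ, 𝓕 g ((n:ℝ) / T) = 0) (x : ℝ) :
    ∑' n : ℤ, g (x + n * T) = 0 := by
  set h : ℝ → ℂ := fun y => g (T * y) with hhdef
  have hcont : Continuous h := hg.comp (continuous_const.mul continuous_id)
  -- Fourier transform of h vanishes at the integers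
  have hFh : ∀ n : ℤ, 𝓕 h ((n:ℤ) : ℝ) = 0 := by
    intro n
    have key : 𝓕 h ((n:ℤ) : ℝ) = |T⁻¹| • 𝓕 g ((n:ℝ) / T) := by
      rw [Real.fourier_real_eq_integral_exp_smul,
        Real.fourier_real_eq_integral_exp_smul]
      rw [← MeasureTheory.Measure.integral_comp_mul_left
        (fun w : ℝ => Complex.exp (↑(-2 * Real.pi * w * ((n:ℝ) / T)) * I) • g w) T]
      congr 1
      ext v
      have : -2 * Real.pi * (T * v) * ((n:ℝ) / T) = -2 * Real.pi * v * (n:ℝ) := by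
        field_simp
      simp only [hhdef, this]
    rw [key, hF n, smul_zero]
  -- decay of h
  have hO : h =O[Filter.cocompact ℝ] (fun y : ℝ => |y| ^ (-(2:ℝ))) := by
    rw [Asymptotics.isBigO_iff]
    refine ⟨A * (T⁻¹) ^ 2, ?_⟩
    have hev : ∀ᶠ y : ℝ in Filter.cocompact ℝ, 1 ≤ |y| := by
      rw [cocompact_eq_atBot_atTop]
      apply Filter.eventually_sup.mpr
      constructor
      · filter_upwards [Filter.eventually_le_atBot (-1 : ℝ)] with y hy
        rw [_root_.abs_of_nonpos (by linarith)]; linarith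
      · filter_upwards [Filter.eventually_ge_atTop (1 : ℝ)] with y hy
        rw [_root_.abs_of_nonneg (by linarith)]; linarith
    filter_upwards [hev] with y hy
    have hy0 : 0 < |y| := by linarith
    have h1 : ‖h y‖ ≤ A * (1 + |T * y|) ^ (-β) := hdec (T * y)
    have h2 : (1 + |T * y|) ^ (-β) ≤ (1 + T * |y|) ^ (-(2:ℝ)) := by
      rw [abs_mul, abs_of_pos hT]
      apply Real.rpow_le_rpow_of_exponent_le
      · have : 0 ≤ T * |y| := by positivity
        linarith
      · linarith
    have h3 : (1 + T * |y|) ^ (-(2:ℝ)) ≤ (T * |y|) ^ (-(2:ℝ)) := by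
      apply Real.rpow_le_rpow_of_nonpos (by positivity) (by linarith) (by norm_num)
    have h4 : (T * |y|) ^ (-(2:ℝ)) = (T⁻¹) ^ 2 * |y| ^ (-(2:ℝ)) := by
      rw [Real.mul_rpow hT.le (abs_nonneg y)]
      rw [show (-(2:ℝ)) = -((2:ℕ):ℝ) by norm_num, Real.rpow_neg hT.le, Real.rpow_natCast,
        ← inv_pow]
    rw [Real.norm_eq_abs (|y| ^ (-(2:ℝ))), _root_.abs_of_nonneg (Real.rpow_nonneg (abs_nonneg y) _)]
    calc ‖h y‖ ≤ A * (1 + |T * y|) ^ (-β) := h1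
      _ ≤ A * ((T * |y|) ^ (-(2:ℝ))) := by
          apply mul_le_mul_of_nonneg_left (h2.trans h3) hA
      _ = A * (T⁻¹) ^ 2 * |y| ^ (-(2:ℝ)) := by rw [h4]; ring
  -- apply Poisson summation
  have hsummF : Summable fun n : ℤ => 𝓕 h n := by
    apply summable_zero.congr
    intro n
    exact (hFh n).symm
  have claim := Real.tsum_eq_tsum_fourier_of_rpow_decay_of_summable hcont
    (by norm_num : (1:ℝ) < 2) hO hsummF (x / T)
  simp only [hFh, zero_mul, tsum_zero] at claim
  rw [← claim]
  apply tsum_congr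
  intro n
  simp only [hhdef]
  congr 1
  field_simp


lemma stmt7_tail_bound {T a b β γ : ℝ} (hT : 0 < T) (hb : 0 < b) (hba : b ≤ a) (hTa : T/2 ≤ a)
    (hγ : 1 ≤ γ) (hβγ : β = γ + 1) :
    a ^ (-β) + a ^ (1-β) / (T * (β-1)) ≤ 3/T * b ^ (-γ) := by
  subst hβγ
  have ha : 0 < a := lt_of_lt_of_le hb hba
  have h1 : a ^ (-(γ+1)) = a ^ (-γ) * a⁻¹ := by
    rw [← Real.rpow_neg_one a, ← Real.rpow_add ha]
    ring_nf
  have h2 : a ^ (-γ) ≤ b ^ (-γ) := Real.rpow_le_rpow_of_nonpos hb hba (by linarith)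
  have h3 : a⁻¹ ≤ 2/T := by
    rw [show (2:ℝ)/T = (T/2)⁻¹ by rw [inv_div]]
    gcongr
  have h4 : a ^ (1-(γ+1)) = a ^ (-γ) := by rw [show (1:ℝ)-(γ+1) = -γ by ring]
  have h5 : a ^ (-γ) / (T * ((γ+1)-1)) ≤ b ^ (-γ) / (T * 1) := by
    apply div_le_div₀ (Real.rpow_nonneg hb.le _) h2 (by linarith)
    nlinarith
  have h6 : a ^ (-γ) * a⁻¹ ≤ b ^ (-γ) * (2/T) :=
    mul_le_mul h2 h3 (by positivity) (Real.rpow_nonneg hb.le _)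
  rw [h1, h4]
  have h7 : b ^ (-γ) / (T*1) = b ^ (-γ) * (1/T) := by ring
  rw [h7] at h5
  have : 3/T * b ^ (-γ) = b ^ (-γ) * (2/T) + b ^ (-γ) * (1/T) := by ring
  linarith

/-- Construction of the transfer function for the time-`T` map:
if `f` is `C^s` (`s ≥ 1`) with `|f^{(r)}(x)| ≤ A(1+|x|)^{−(s+r+1+Re ν)}` for
`0 ≤ r ≤ s`, and `f̂(k/T) = 0` for every integer `k`, then
`u(x) = Σ_{m≥1} f(x+mT)` converges, is `C^s`, solves `u(x−T) − u(x) = f(x)`, and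
satisfies `|u^{(r)}(x)| ≤ (C/T) A (1+|x|)^{−(s+r+Re ν)}` with `C = C(s)`. -/
theorem stmt_7 (s : ℕ) (hs : 1 ≤ s) :
    ∃ C > (0 : ℝ), ∀ (T : ℝ), 0 < T → ∀ (ν : ℂ), 0 ≤ ν.re →
      ∀ (A : ℝ), 0 < A → ∀ f : ℝ → ℂ, ContDiff ℝ s f →
      (∀ r : ℕ, r ≤ s → ∀ x : ℝ,
        ‖iteratedDeriv r f x‖ ≤ A * (1 + |x|) ^ (-((s : ℝ) + r + 1 + ν.re))) →
      (∀ k : ℤ,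
        (∫ x : ℝ, f x * Complex.exp (-2 * Real.pi * I * x * ((k : ℝ) / T))) = 0) →
      (∀ x : ℝ, Summable (fun m : ℕ => f (x + ((m : ℝ) + 1) * T))) ∧
      ContDiff ℝ s (fun x : ℝ => ∑' m : ℕ, f (x + ((m : ℝ) + 1) * T)) ∧
      (∀ x : ℝ,
        (∑' m : ℕ, f (x - T + ((m : ℝ) + 1) * T)) -
          (∑' m : ℕ, f (x + ((m : ℝ) + 1) * T)) = f x) ∧
      (∀ r : ℕ, r ≤ s → ∀ x : ℝ,
        ‖iteratedDeriv r (fun x : ℝ => ∑' m : ℕ, f (x + ((m : ℝ) + 1) * T)) x‖ ≤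
          C / T * A * (1 + |x|) ^ (-((s : ℝ) + r + ν.re))) := by
  refine ⟨3, by norm_num, ?_⟩
  intro T hT ν hν A hA f hf hdecay hfour
  have hs1 : (1:ℝ) ≤ (s:ℝ) := by exact_mod_cast hs
  have hβ2 : ∀ r : ℕ, (2:ℝ) ≤ (s:ℝ) + r + 1 + ν.re := by
    intro r
    have : (0:ℝ) ≤ r := Nat.cast_nonneg r
    linarith
  have hβ1 : ∀ r : ℕ, (1:ℝ) < (s:ℝ) + r + 1 + ν.re := fun r => by linarith [hβ2 r]
  have hcont : ∀ r : ℕ, r ≤ s → Continuous (iteratedDeriv r f) := fun r hr =>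
    hf.continuous_iteratedDeriv r (by exact_mod_cast hr)
  -- ℤ-summability
  have hsumZ : ∀ r : ℕ, r ≤ s → ∀ x : ℝ,
      Summable fun n : ℤ => iteratedDeriv r f (x + (n:ℝ) * T) :=
    fun r hr x => stmt7_summable_int_family hA.le (hβ2 r) (hdecay r hr) hT x
  -- ℕ-summability
  have hsumN : ∀ r : ℕ, r ≤ s → ∀ x : ℝ,
      Summable fun m : ℕ => iteratedDeriv r f (x + ((m:ℝ) + 1) * T) := by
    intro r hr x
    have hinj : Function.Injective (fun m : ℕ => (m : ℤ) + 1) := fun a b hab => by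
      simpa using hab
    have h1 := (hsumZ r hr x).comp_injective hinj
    apply h1.congr
    intro m
    simp only [Function.comp_apply]
    norm_num
  -- the family u
  set u : ℕ → ℝ → ℂ := fun r x => ∑' m : ℕ, iteratedDeriv r f (x + ((m:ℝ) + 1) * T) with hudef
  -- uniform bound on balls
  have hbound : ∀ r : ℕ, r ≤ s → ∀ (R y : ℝ), |y| ≤ R → ∀ m : ℕ,
      ‖iteratedDeriv r f (y + ((m:ℝ) + 1) * T)‖ ≤
        A * ((1 + R) * max 1 T⁻¹) ^ 2 * (1 + ((m:ℝ) + 1)) ^ (-(2:ℝ)) := by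
    intro r hr R y hyR m
    have h1 := stmt7_decay_two hA.le (hβ2 r) (hdecay r hr) (y + ((m:ℝ) + 1) * T)
    have h3 := abs_add_le (y + ((m:ℝ) + 1) * T) (-y)
    rw [show (y + ((m:ℝ) + 1) * T) + (-y) = ((m:ℝ) + 1) * T by ring, abs_neg,
      abs_mul, _root_.abs_of_nonneg (by positivity : (0:ℝ) ≤ (m:ℝ) + 1), abs_of_pos hT] at h3
    have h2 := stmt7_key_ineq (x := y) (R := R) (n := (m:ℝ) + 1) (y := y + ((m:ℝ) + 1) * T)
      hT (by positivity) hyR (by linarith)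
    calc ‖iteratedDeriv r f (y + ((m:ℝ) + 1) * T)‖
        ≤ A * (1 + |y + ((m:ℝ) + 1) * T|) ^ (-(2:ℝ)) := h1
      _ ≤ A * (((1 + R) * max 1 T⁻¹) ^ 2 * (1 + ((m:ℝ) + 1)) ^ (-(2:ℝ))) :=
          mul_le_mul_of_nonneg_left h2 hA.le
      _ = A * ((1 + R) * max 1 T⁻¹) ^ 2 * (1 + ((m:ℝ) + 1)) ^ (-(2:ℝ)) := by ring
  -- termwise differentiability
  have hDeriv : ∀ r : ℕ, r < s → ∀ x : ℝ, HasDerivAt (u r) (u (r+1) x) x := by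
    intro r hr x
    have hr1 : r + 1 ≤ s := hr
    have hKpos : 0 < A * ((1 + (|x| + 1)) * max 1 T⁻¹) ^ 2 := by positivity
    have hdf : Differentiable ℝ (iteratedDeriv r f) :=
      hf.differentiable_iteratedDeriv r (by exact_mod_cast hr)
    have H := hasDerivAt_tsum_of_isPreconnected
      (u := fun m : ℕ => A * ((1 + (|x| + 1)) * max 1 T⁻¹) ^ 2 * (1 + ((m:ℝ) + 1)) ^ (-(2:ℝ)))
      (g := fun m y => iteratedDeriv r f (y + ((m:ℝ) + 1) * T))
      (g' := fun m y => iteratedDeriv (r+1) f (y + ((m:ℝ) + 1) * T))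
      (t := Metric.ball (0:ℝ) (|x| + 1)) (y₀ := x) (y := x)
      (stmt7_summable_model.mul_left _)
      Metric.isOpen_ball
      (convex_ball _ _).isPreconnected
      ?_ ?_ ?_ ?_ ?_
    · exact H
    · intro m y _
      have h1 : HasDerivAt (iteratedDeriv r f)
          (deriv (iteratedDeriv r f) (y + ((m:ℝ) + 1) * T)) (y + ((m:ℝ) + 1) * T) :=
        (hdf _).hasDerivAt
      have h2 := h1.comp_add_const y (((m:ℝ) + 1) * T)
      rwa [show deriv (iteratedDeriv r f) (y + ((m:ℝ) + 1) * T)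
        = iteratedDeriv (r+1) f (y + ((m:ℝ) + 1) * T) from by rw [iteratedDeriv_succ]] at h2
    · intro m y hy
      have hyR : |y| ≤ |x| + 1 := by
        have := Metric.mem_ball.mp hy
        rw [Real.dist_eq, sub_zero] at this
        linarith
      exact hbound (r+1) hr1 (|x| + 1) y hyR m
    · exact Metric.mem_ball.mpr (by rw [Real.dist_eq, sub_zero]; linarith [abs_nonneg x, (by norm_num : (0:ℝ) < 1)])
    · exact hsumN r hr.le x
    · exact Metric.mem_ball.mpr (by rw [Real.dist_eq, sub_zero]; linarith [abs_nonneg x, (by norm_num : (0:ℝ) < 1)])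
  -- iterated derivatives of u 0
  have hiter : ∀ r : ℕ, r ≤ s → iteratedDeriv r (u 0) = u r := by
    intro r
    induction r with
    | zero => intro _; simp [iteratedDeriv_zero]
    | succ r ih =>
      intro hr
      rw [iteratedDeriv_succ, ih (Nat.le_of_succ_le hr)]
      funext y
      exact (hDeriv r (Nat.lt_of_succ_le hr) y).deriv
  -- continuity of u r
  have hcontu : ∀ r : ℕ, r ≤ s → Continuous (u r) := by
    intro r hr
    rw [continuous_iff_continuousAt]
    intro x
    have hball : Metric.ball (0:ℝ) (|x| + 1) ∈ nhds x :=
      Metric.isOpen_ball.mem_nhds (Metric.mem_ball.mpr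
        (by rw [Real.dist_eq, sub_zero]; linarith [abs_nonneg x, (by norm_num : (0:ℝ) < 1)]))
    apply ContinuousOn.continuousAt ?_ hball
    apply continuousOn_tsum
      (u := fun m : ℕ => A * ((1 + (|x| + 1)) * max 1 T⁻¹) ^ 2 * (1 + ((m:ℝ) + 1)) ^ (-(2:ℝ)))
    · intro m
      exact ((hcont r hr).comp (continuous_id.add continuous_const)).continuousOn
    · exact stmt7_summable_model.mul_left _
    · intro m y hy
      have hyR : |y| ≤ |x| + 1 := by
        have := Metric.mem_ball.mp hy
        rw [Real.dist_eq, sub_zero] at this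
        linarith
      exact hbound r hr (|x| + 1) y hyR m
  -- u 0 agrees with the series of f
  have hu0 : (fun x : ℝ => ∑' m : ℕ, f (x + ((m:ℝ) + 1) * T)) = u 0 := by
    funext x
    simp only [hudef]
    rw [iteratedDeriv_zero]
  refine ⟨?_, ?_, ?_, ?_⟩
  · -- summability
    intro x
    have := hsumN 0 (Nat.zero_le s) x
    simpa only [iteratedDeriv_zero] using this
  · -- smoothness
    rw [hu0]
    rw [contDiff_nat_iff_iteratedDeriv]
    constructor
    · intro m hm
      rw [hiter m hm]
      exact hcontu m hm
    · intro m hm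
      rw [hiter m hm.le]
      intro y
      exact (hDeriv m hm y).differentiableAt
  · -- the difference equation
    intro x
    have hsum1 : Summable (fun m : ℕ => f (x + (m:ℝ) * T)) := by
      have h := hsumN 0 (Nat.zero_le s) (x - T)
      simp only [iteratedDeriv_zero] at h
      apply h.congr
      intro m
      congr 1
      ring
    have h0 := Summable.tsum_eq_zero_add hsum1
    have e1 : (∑' m : ℕ, f (x - T + ((m:ℝ) + 1) * T)) = ∑' m : ℕ, f (x + (m:ℝ) * T) :=
      tsum_congr fun m => by congr 1; ring
    have e3 : (∑' m : ℕ, f (x + ((m+1:ℕ):ℝ) * T)) = ∑' m : ℕ, f (x + ((m:ℝ) + 1) * T) :=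
      tsum_congr fun m => by push_cast; ring_nf
    rw [e1, h0, e3]
    norm_num
  · -- the decay bound
    intro r hr x
    have hiterx : iteratedDeriv r (fun x : ℝ => ∑' m : ℕ, f (x + ((m:ℝ) + 1) * T)) x = u r x := by
      rw [hu0, hiter r hr]
    rw [hiterx]
    have hβγ : (s:ℝ) + r + 1 + ν.re = ((s:ℝ) + r + ν.re) + 1 := by ring
    have hγ1 : (1:ℝ) ≤ (s:ℝ) + r + ν.re := by
      have : (0:ℝ) ≤ r := Nat.cast_nonneg r
      linarith
    have hb0 : (0:ℝ) < 1 + |x| := by linarith [abs_nonneg x]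
    rcases le_or_gt (-(T/2)) x with hx | hx
    · -- Case 1 : x ≥ -T/2, use the series directly
      set a : ℝ := 1 + x + T with ha
      have hax : 1 + |x| ≤ a := by
        rcases abs_cases x with ⟨h1, h2⟩ | ⟨h1, h2⟩ <;> (rw [h1]; simp only [ha]; linarith)
      have haT : T/2 ≤ a := by linarith [abs_nonneg x]
      have ha0 : 0 < a := lt_of_lt_of_le hb0 hax
      have hterm : ∀ m : ℕ, ‖iteratedDeriv r f (x + ((m:ℝ) + 1) * T)‖
          ≤ A * (a + (m:ℝ) * T) ^ (-((s:ℝ) + r + 1 + ν.re)) := by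
        intro m
        have hm0 : (0:ℝ) ≤ m := Nat.cast_nonneg m
        have hxm : 0 ≤ x + ((m:ℝ) + 1) * T := by nlinarith
        have h := hdecay r hr (x + ((m:ℝ) + 1) * T)
        rwa [_root_.abs_of_nonneg hxm,
          show 1 + (x + ((m:ℝ) + 1) * T) = a + (m:ℝ) * T by simp only [ha]; ring] at h
      have hsummb' : Summable (fun m : ℕ => (a + (m:ℝ) * T) ^ (-((s:ℝ) + r + 1 + ν.re))) := by
        rw [← summable_nat_add_iff 1]
        apply (stmt7_summable_rpow_aux hT ha0 (hβ1 r)).congr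
        intro m
        congr 2
        push_cast
        ring
      have hsummb := hsummb'.mul_left A
      have hnorms : Summable (fun m : ℕ => ‖iteratedDeriv r f (x + ((m:ℝ) + 1) * T)‖) :=
        Summable.of_nonneg_of_le (fun _ => norm_nonneg _) hterm hsummb
      have hzero := Summable.tsum_eq_zero_add hsummb'
      have hv0 : a + ((0:ℕ):ℝ) * T = a := by norm_num
      have hvshift : (∑' m : ℕ, (a + (((m+1:ℕ)):ℝ) * T) ^ (-((s:ℝ) + r + 1 + ν.re)))
          = ∑' m : ℕ, (a + ((m:ℝ) + 1) * T) ^ (-((s:ℝ) + r + 1 + ν.re)) :=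
        tsum_congr fun m => by congr 2; push_cast; ring
      rw [hv0] at hzero
      rw [hvshift] at hzero
      have htail := stmt7_tsum_rpow_le (a := a) hT ha0 (hβ1 r)
      have hfin := stmt7_tail_bound hT hb0 hax haT hγ1 hβγ
      calc ‖u r x‖ ≤ ∑' m : ℕ, ‖iteratedDeriv r f (x + ((m:ℝ) + 1) * T)‖ :=
            norm_tsum_le_tsum_norm hnorms
        _ ≤ ∑' m : ℕ, A * (a + (m:ℝ) * T) ^ (-((s:ℝ) + r + 1 + ν.re)) :=
            Summable.tsum_le_tsum hterm hnorms hsummb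
        _ = A * ∑' m : ℕ, (a + (m:ℝ) * T) ^ (-((s:ℝ) + r + 1 + ν.re)) := tsum_mul_left
        _ = A * (a ^ (-((s:ℝ) + r + 1 + ν.re))
              + ∑' m : ℕ, (a + ((m:ℝ) + 1) * T) ^ (-((s:ℝ) + r + 1 + ν.re))) := by rw [hzero]
        _ ≤ A * (a ^ (-((s:ℝ) + r + 1 + ν.re))
              + a ^ (1 - ((s:ℝ) + r + 1 + ν.re)) / (T * (((s:ℝ) + r + 1 + ν.re) - 1))) := by
            apply mul_le_mul_of_nonneg_left (by linarith [htail]) hA.le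
        _ ≤ A * (3/T * (1 + |x|) ^ (-((s:ℝ) + r + ν.re))) :=
            mul_le_mul_of_nonneg_left hfin hA.le
        _ = 3 / T * A * (1 + |x|) ^ (-((s:ℝ) + r + ν.re)) := by ring
    · -- Case 2 : x < -T/2, use Poisson summation
      have hx0 : x < 0 := by linarith
      have habs : |x| = -x := abs_of_neg hx0
      have hfour' : ∀ k : ℤ, 𝓕 f ((k:ℝ) / T) = 0 := fun k => by
        rw [stmt7_fourier_eq_of_integral, ← hfour k]
        congr 1
        ext v
        congr 2
        push_cast
        ring
      have hFr : ∀ n : ℤ, 𝓕 (iteratedDeriv r f) ((n:ℝ) / T) = 0 := fun n => by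
        rw [stmt7_fourier_iteratedDeriv_eq hf hν hdecay hr, hfour' n, mul_zero]
      have hz : (∑' n : ℤ, iteratedDeriv r f (x + (n:ℝ) * T)) = 0 :=
        stmt7_poisson_zero (hcont r hr) hA.le (hβ2 r) (hdecay r hr) hT hFr x
      have hZ := hsumZ r hr x
      have hnat' : Summable fun n : ℕ => iteratedDeriv r f (x + ((n:ℤ):ℝ) * T) :=
        hZ.comp_injective Nat.cast_injective
      have hneg' : Summable fun n : ℕ => iteratedDeriv r f (x + ((-((n:ℤ)+1) : ℤ):ℝ) * T) := by
        have hinj : Function.Injective (fun n : ℕ => -((n:ℤ)+1)) :=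
          (neg_injective.comp (add_left_injective 1)).comp Nat.cast_injective
        exact hZ.comp_injective hinj
      have hsplit := tsum_of_nat_of_neg_add_one (f := fun n : ℤ => iteratedDeriv r f (x + (n:ℝ) * T)) hnat' hneg'
      have h0sum := Summable.tsum_eq_zero_add hnat'
      -- identify u r x
      have h00 : iteratedDeriv r f (x + (((0:ℕ):ℤ):ℝ) * T) = iteratedDeriv r f x := by
        norm_num
      rw [h00] at h0sum
      have hux : u r x = (∑' n : ℕ, iteratedDeriv r f (x + ((n:ℤ):ℝ) * T))
          - iteratedDeriv r f x := by
        rw [h0sum, add_sub_cancel_left]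
        simp only [hudef]
        apply tsum_congr
        intro m
        congr 2
        push_cast
        ring
      have hZsplit : (∑' n : ℕ, iteratedDeriv r f (x + ((n:ℤ):ℝ) * T))
          = - ∑' n : ℕ, iteratedDeriv r f (x + ((-((n:ℤ)+1) : ℤ):ℝ) * T) := by
        rw [hz] at hsplit
        linear_combination -hsplit
      rw [hux, hZsplit]
      -- bound the two pieces
      have hterm2 : ∀ n : ℕ, ‖iteratedDeriv r f (x + ((-((n:ℤ)+1) : ℤ):ℝ) * T)‖
          ≤ A * ((1 + |x|) + ((n:ℝ) + 1) * T) ^ (-((s:ℝ) + r + 1 + ν.re)) := by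
        intro n
        have h := hdecay r hr (x + ((-((n:ℤ)+1) : ℤ):ℝ) * T)
        have harg : x + ((-((n:ℤ)+1) : ℤ):ℝ) * T = x - ((n:ℝ) + 1) * T := by push_cast; ring
        rw [harg] at h ⊢
        have habs2 : |x - ((n:ℝ) + 1) * T| = |x| + ((n:ℝ) + 1) * T := by
          rw [habs, _root_.abs_of_neg (by nlinarith [(Nat.cast_nonneg n : (0:ℝ) ≤ (n:ℝ))] : x - ((n:ℝ)+1)*T < 0)]
          ring
        rwa [habs2, show 1 + (|x| + ((n:ℝ) + 1) * T) = (1 + |x|) + ((n:ℝ) + 1) * T by ring] at h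
      have hsummb2 : Summable (fun n : ℕ =>
          A * ((1 + |x|) + ((n:ℝ) + 1) * T) ^ (-((s:ℝ) + r + 1 + ν.re))) :=
        (stmt7_summable_rpow_aux hT hb0 (hβ1 r)).mul_left A
      have hnorms2 : Summable (fun n : ℕ =>
          ‖iteratedDeriv r f (x + ((-((n:ℤ)+1) : ℤ):ℝ) * T)‖) :=
        Summable.of_nonneg_of_le (fun _ => norm_nonneg _) hterm2 hsummb2
      have hhead : ‖iteratedDeriv r f x‖
          ≤ A * (1 + |x|) ^ (-((s:ℝ) + r + 1 + ν.re)) := hdecay r hr x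
      have htail := stmt7_tsum_rpow_le (a := 1 + |x|) hT hb0 (hβ1 r)
      have hfin := stmt7_tail_bound hT hb0 (le_refl (1 + |x|)) (by linarith [habs, hx]) hγ1 hβγ
      calc ‖(- ∑' n : ℕ, iteratedDeriv r f (x + ((-((n:ℤ)+1) : ℤ):ℝ) * T))
            - iteratedDeriv r f x‖
          ≤ ‖∑' n : ℕ, iteratedDeriv r f (x + ((-((n:ℤ)+1) : ℤ):ℝ) * T)‖
            + ‖iteratedDeriv r f x‖ := by
            rw [show (- ∑' n : ℕ, iteratedDeriv r f (x + ((-((n:ℤ)+1) : ℤ):ℝ) * T))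
                - iteratedDeriv r f x
              = -((∑' n : ℕ, iteratedDeriv r f (x + ((-((n:ℤ)+1) : ℤ):ℝ) * T))
                + iteratedDeriv r f x) from by ring, norm_neg]
            exact norm_add_le _ _
        _ ≤ (∑' n : ℕ, A * ((1 + |x|) + ((n:ℝ) + 1) * T) ^ (-((s:ℝ) + r + 1 + ν.re)))
            + A * (1 + |x|) ^ (-((s:ℝ) + r + 1 + ν.re)) := by
            apply add_le_add ?_ hhead
            exact le_trans (norm_tsum_le_tsum_norm hnorms2) (Summable.tsum_le_tsum hterm2 hnorms2 hsummb2)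
        _ = A * (∑' n : ℕ, ((1 + |x|) + ((n:ℝ) + 1) * T) ^ (-((s:ℝ) + r + 1 + ν.re)))
            + A * (1 + |x|) ^ (-((s:ℝ) + r + 1 + ν.re)) := by rw [tsum_mul_left]
        _ ≤ A * ((1 + |x|) ^ (1 - ((s:ℝ) + r + 1 + ν.re)) / (T * (((s:ℝ) + r + 1 + ν.re) - 1)))
            + A * (1 + |x|) ^ (-((s:ℝ) + r + 1 + ν.re)) := by
            apply add_le_add_left (mul_le_mul_of_nonneg_left htail hA.le)
        _ = A * ((1 + |x|) ^ (-((s:ℝ) + r + 1 + ν.re))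
              + (1 + |x|) ^ (1 - ((s:ℝ) + r + 1 + ν.re)) / (T * (((s:ℝ) + r + 1 + ν.re) - 1))) := by
            ring
        _ ≤ A * (3/T * (1 + |x|) ^ (-((s:ℝ) + r + ν.re))) :=
            mul_le_mul_of_nonneg_left hfin hA.le
        _ = 3 / T * A * (1 + |x|) ^ (-((s:ℝ) + r + ν.re)) := by ring
end

section
/- Let f be holomorphic on the upper half-plane ℍ, and suppose there are s > 1/2 and C > 0 with |f(z)| ≤ C(1+|z|)^{−2s} for all z ∈ ℍ. Then for every ξ ∈ ℝ, the value F(y) = ∫_ℝ f(x+iy) e^{−2πiξ(x+iy)} dx (an absolutely convergent integral) is independent of y ∈ (0,∞); moreover, if ξ ≤ 0 then F(y) = 0 for every y > 0. -/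
open MeasureTheory Complex Filter Topology

private lemma stmt8_exp_norm (ξ : ℝ) (z : ℂ) :
    ‖Complex.exp (-2 * Real.pi * I * ξ * z)‖ = Real.exp (2 * Real.pi * ξ * z.im) := by
  rw [Complex.norm_exp]
  congr 1
  simp [Complex.mul_re, Complex.mul_im]

private lemma stmt8_rect (g : ℂ → ℂ) (R y₁ y₂ : ℝ)
    (H : DifferentiableOn ℂ g (Set.uIcc (-R) R ×ℂ Set.uIcc y₁ y₂)) :
    (∫ x in (-R)..R, g (↑x + ↑y₁ * I)) - (∫ x in (-R)..R, g (↑x + ↑y₂ * I)) =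
      I • (∫ y in y₁..y₂, g (↑(-R) + ↑y * I)) - I • ∫ y in y₁..y₂, g (↑R + ↑y * I) := by
  have h0 := Complex.integral_boundary_rect_eq_zero_of_differentiableOn g ⟨-R, y₁⟩ ⟨R, y₂⟩ H
  simp only [show ((⟨-R, y₁⟩ : ℂ)).re = -R from rfl, show ((⟨-R, y₁⟩ : ℂ)).im = y₁ from rfl,
    show ((⟨R, y₂⟩ : ℂ)).re = R from rfl, show ((⟨R, y₂⟩ : ℂ)).im = y₂ from rfl,
    smul_eq_mul] at h0
  simp only [smul_eq_mul]
  linear_combination h0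

/-- If `f` is holomorphic on the upper half-plane with
`|f(z)| ≤ C(1+|z|)^{−2s}` for some `s > 1/2`, then for each `ξ ∈ ℝ` the
(absolutely convergent) contour Fourier integral
`F(y) = ∫_ℝ f(x+iy) e^{−2πiξ(x+iy)} dx` is independent of `y > 0`, and
vanishes for `ξ ≤ 0`. -/
theorem stmt_8 (f : ℂ → ℂ) (hf : DifferentiableOn ℂ f {z : ℂ | 0 < z.im})
    (s C : ℝ) (hs : 1 / 2 < s) (hC : 0 < C)
    (hbound : ∀ z : ℂ, 0 < z.im → ‖f z‖ ≤ C * (1 + ‖z‖) ^ (-(2 * s))) :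
    ∀ ξ : ℝ,
      (∀ y : ℝ, 0 < y → Integrable (fun x : ℝ =>
        f (x + y * I) * Complex.exp (-2 * Real.pi * I * ξ * (x + y * I)))) ∧
      (∀ y₁ y₂ : ℝ, 0 < y₁ → 0 < y₂ →
        (∫ x : ℝ, f (x + y₁ * I) *
            Complex.exp (-2 * Real.pi * I * ξ * (x + y₁ * I))) =
          (∫ x : ℝ, f (x + y₂ * I) *
            Complex.exp (-2 * Real.pi * I * ξ * (x + y₂ * I)))) ∧
      (ξ ≤ 0 → ∀ y : ℝ, 0 < y →
        (∫ x : ℝ, f (x + y * I) *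
          Complex.exp (-2 * Real.pi * I * ξ * (x + y * I))) = 0) := by
  intro ξ
  set g : ℂ → ℂ := fun z => f z * Complex.exp (-2 * Real.pi * I * ξ * z) with hgdef
  -- differentiability / continuity of g
  have hgdiff : DifferentiableOn ℂ g {z : ℂ | 0 < z.im} := by
    apply hf.mul
    exact (Complex.differentiable_exp.comp
      ((differentiable_const _).mul differentiable_id)).differentiableOn
  have hgc : ContinuousOn g {z : ℂ | 0 < z.im} := hgdiff.continuousOn
  have hmem : ∀ (x y : ℝ), 0 < y → (↑x + ↑y * I) ∈ {z : ℂ | 0 < z.im} := by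
    intro x y hy; simp [hy]
  -- pointwise norm bound
  have hnorm : ∀ (x y : ℝ), 0 < y → ‖g (↑x + ↑y * I)‖ ≤
      C * (1 + ‖↑x + ↑y * I‖) ^ (-(2 * s)) * Real.exp (2 * Real.pi * ξ * y) := by
    intro x y hy
    rw [hgdef]
    simp only
    rw [norm_mul, stmt8_exp_norm, show ((x : ℂ) + ↑y * I).im = y by simp]
    exact mul_le_mul_of_nonneg_right (hbound _ (by simp [hy])) (Real.exp_nonneg _)
  have hcont : ∀ y : ℝ, 0 < y → Continuous (fun x : ℝ => g (↑x + ↑y * I)) := by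
    intro y hy
    exact hgc.comp_continuous (Complex.continuous_ofReal.add continuous_const)
      (fun x => hmem x y hy)
  have h2s : (1 : ℝ) < 2 * s := by linarith
  have habsre : ∀ (x y : ℝ), |x| ≤ ‖↑x + ↑y * I‖ := by
    intro x y; simpa using Complex.abs_re_le_norm (↑x + ↑y * I)
  have habsim : ∀ (x y : ℝ), |y| ≤ ‖↑x + ↑y * I‖ := by
    intro x y; simpa using Complex.abs_im_le_norm (↑x + ↑y * I)
  -- integrability
  have hint : ∀ y : ℝ, 0 < y → Integrable (fun x : ℝ => g (↑x + ↑y * I)) := by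
    intro y hy
    have hK : Integrable (fun x : ℝ => (1 + ‖x‖) ^ (-(2 * s))) := by
      apply integrable_one_add_norm; simp [h2s]
    refine ((hK.const_mul (C * Real.exp (2 * Real.pi * ξ * y))).mono'
      ((hcont y hy).aestronglyMeasurable) (ae_of_all _ fun x => ?_))
    have h1 : (1 + ‖↑x + ↑y * I‖) ^ (-(2 * s)) ≤ (1 + ‖x‖) ^ (-(2 * s)) := by
      apply Real.rpow_le_rpow_of_nonpos (by positivity) _ (by linarith)
      have := habsre x y
      simp only [Real.norm_eq_abs]
      linarith
    calc ‖g (↑x + ↑y * I)‖ ≤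
        C * (1 + ‖↑x + ↑y * I‖) ^ (-(2 * s)) * Real.exp (2 * Real.pi * ξ * y) :=
          hnorm x y hy
      _ ≤ C * (1 + ‖x‖) ^ (-(2 * s)) * Real.exp (2 * Real.pi * ξ * y) := by
          have := Real.exp_nonneg (2 * Real.pi * ξ * y)
          nlinarith [mul_le_mul_of_nonneg_left h1 hC.le]
      _ = C * Real.exp (2 * Real.pi * ξ * y) * ((1 + ‖x‖) ^ (-(2 * s))) := by ring
  -- independence of y
  have hconst : ∀ y₁ y₂ : ℝ, 0 < y₁ → 0 < y₂ →
      (∫ x : ℝ, g (↑x + ↑y₁ * I)) = ∫ x : ℝ, g (↑x + ↑y₂ * I) := by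
    intro y₁ y₂ hy₁ hy₂
    have hD : Tendsto (fun R : ℝ => (∫ x in (-R)..R, g (↑x + ↑y₁ * I)) -
        ∫ x in (-R)..R, g (↑x + ↑y₂ * I)) atTop
        (𝓝 ((∫ x : ℝ, g (↑x + ↑y₁ * I)) - ∫ x : ℝ, g (↑x + ↑y₂ * I))) :=
      (intervalIntegral_tendsto_integral (hint y₁ hy₁) tendsto_neg_atTop_atBot tendsto_id).sub
        (intervalIntegral_tendsto_integral (hint y₂ hy₂) tendsto_neg_atTop_atBot tendsto_id)
    have hrect : ∀ R : ℝ, (∫ x in (-R)..R, g (↑x + ↑y₁ * I)) -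
        (∫ x in (-R)..R, g (↑x + ↑y₂ * I)) =
        I • (∫ y in y₁..y₂, g (↑(-R) + ↑y * I)) - I • ∫ y in y₁..y₂, g (↑R + ↑y * I) := by
      intro R
      apply stmt8_rect
      apply hgdiff.mono
      intro z hz
      rw [Complex.mem_reProdIm] at hz
      have h2 := hz.2
      rw [Set.mem_uIcc] at h2
      rcases h2 with ⟨h, _⟩ | ⟨h, _⟩ <;> simp only [Set.mem_setOf_eq] <;> linarith
    set M := Real.exp (2 * Real.pi * |ξ| * (|y₁| + |y₂|)) with hMdef
    have hvert : ∀ R : ℝ, 0 ≤ R → ∀ a : ℝ, R ≤ |a| →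
        ‖∫ y in y₁..y₂, g (↑a + ↑y * I)‖ ≤ C * (1 + R) ^ (-(2 * s)) * M * |y₂ - y₁| := by
      intro R hR a ha
      apply intervalIntegral.norm_integral_le_of_norm_le_const
      intro y hy
      have hy0 : 0 < y := lt_trans (lt_min hy₁ hy₂) hy.1
      have hyle : y ≤ |y₁| + |y₂| :=
        le_trans hy.2 (max_le (by linarith [le_abs_self y₁, abs_nonneg y₂])
          (by linarith [le_abs_self y₂, abs_nonneg y₁]))
      have h1 : (1 + ‖↑a + ↑y * I‖) ^ (-(2 * s)) ≤ (1 + R) ^ (-(2 * s)) := by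
        apply Real.rpow_le_rpow_of_nonpos (by positivity) _ (by linarith)
        have := habsre a y
        linarith
      have h2 : Real.exp (2 * Real.pi * ξ * y) ≤ M := by
        rw [hMdef, Real.exp_le_exp]
        have hp : (0:ℝ) < Real.pi := Real.pi_pos
        have hξy : ξ * y ≤ |ξ| * (|y₁| + |y₂|) :=
          le_trans (mul_le_mul_of_nonneg_right (le_abs_self ξ) hy0.le)
            (mul_le_mul_of_nonneg_left hyle (abs_nonneg ξ))
        nlinarith
      calc ‖g (↑a + ↑y * I)‖ ≤
          C * (1 + ‖↑a + ↑y * I‖) ^ (-(2 * s)) * Real.exp (2 * Real.pi * ξ * y) :=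
            hnorm a y hy0
        _ ≤ C * (1 + R) ^ (-(2 * s)) * M := by
            exact mul_le_mul (mul_le_mul_of_nonneg_left h1 hC.le) h2
              (Real.exp_nonneg _) (by positivity)
    have hbnd : ∀ᶠ R : ℝ in atTop,
        ‖(∫ x in (-R)..R, g (↑x + ↑y₁ * I)) - ∫ x in (-R)..R, g (↑x + ↑y₂ * I)‖ ≤
          2 * (C * (1 + R) ^ (-(2 * s)) * M * |y₂ - y₁|) := by
      filter_upwards [eventually_ge_atTop (0 : ℝ)] with R hR
      rw [hrect R]
      have hnI : ‖I • (∫ y in y₁..y₂, g (↑(-R) + ↑y * I))‖ =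
          ‖∫ y in y₁..y₂, g (↑(-R) + ↑y * I)‖ := by
        rw [norm_smul]; simp
      have hnI' : ‖I • (∫ y in y₁..y₂, g (↑R + ↑y * I))‖ =
          ‖∫ y in y₁..y₂, g (↑R + ↑y * I)‖ := by
        rw [norm_smul]; simp
      have h1 := hvert R hR (-R) (by rw [abs_neg, _root_.abs_of_nonneg hR])
      have h2 := hvert R hR R (by rw [_root_.abs_of_nonneg hR])
      calc ‖I • (∫ y in y₁..y₂, g (↑(-R) + ↑y * I)) -
            I • ∫ y in y₁..y₂, g (↑R + ↑y * I)‖ ≤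
          ‖I • (∫ y in y₁..y₂, g (↑(-R) + ↑y * I))‖ +
            ‖I • ∫ y in y₁..y₂, g (↑R + ↑y * I)‖ := norm_sub_le _ _
        _ ≤ 2 * (C * (1 + R) ^ (-(2 * s)) * M * |y₂ - y₁|) := by
            rw [hnI, hnI']; linarith
    have hlim0 : Tendsto (fun R : ℝ => 2 * (C * (1 + R) ^ (-(2 * s)) * M * |y₂ - y₁|))
        atTop (𝓝 0) := by
      have h1 : Tendsto (fun R : ℝ => (1 + R) ^ (-(2 * s))) atTop (𝓝 0) :=
        (tendsto_rpow_neg_atTop (by linarith)).comp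
          (tendsto_atTop_add_const_left atTop 1 tendsto_id)
      simpa using (((h1.const_mul C).mul_const M).mul_const |y₂ - y₁|).const_mul 2
    have hD0 : Tendsto (fun R : ℝ => (∫ x in (-R)..R, g (↑x + ↑y₁ * I)) -
        ∫ x in (-R)..R, g (↑x + ↑y₂ * I)) atTop (𝓝 0) :=
      squeeze_zero_norm' hbnd hlim0
    exact sub_eq_zero.mp (tendsto_nhds_unique hD hD0)
  -- vanishing for ξ ≤ 0
  have hvan : ξ ≤ 0 → ∀ y₀ : ℝ, 0 < y₀ → (∫ x : ℝ, g (↑x + ↑y₀ * I)) = 0 := by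
    intro hξ y₀ hy₀
    have hKint : Integrable (fun x : ℝ => (1 + ‖x‖) ^ (-(s + 1 / 2))) := by
      apply integrable_one_add_norm; simp; linarith
    set K := ∫ x : ℝ, (1 + ‖x‖) ^ (-(s + 1 / 2)) with hKdef
    have hFb : ∀ y : ℝ, 0 < y →
        ‖∫ x : ℝ, g (↑x + ↑y * I)‖ ≤ C * (1 + y) ^ (-(s - 1 / 2)) * K := by
      intro y hy
      have hb : ∀ x : ℝ, ‖g (↑x + ↑y * I)‖ ≤
          C * (1 + y) ^ (-(s - 1 / 2)) * ((1 + ‖x‖) ^ (-(s + 1 / 2))) := by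
        intro x
        have hexp : Real.exp (2 * Real.pi * ξ * y) ≤ 1 := by
          rw [Real.exp_le_one_iff]
          have h5 : ξ * y ≤ 0 := mul_nonpos_of_nonpos_of_nonneg hξ hy.le
          nlinarith [mul_nonneg Real.pi_pos.le (neg_nonneg.mpr h5)]
        have hA1 : (1:ℝ) + |x| ≤ 1 + ‖↑x + ↑y * I‖ := by
          linarith [habsre x y]
        have hA2 : (1:ℝ) + y ≤ 1 + ‖↑x + ↑y * I‖ := by
          have := habsim x y
          rw [abs_of_pos hy] at this
          linarith
        have hsplit : (1 + ‖↑x + ↑y * I‖) ^ (-(2 * s)) ≤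
            (1 + y) ^ (-(s - 1 / 2)) * ((1 + ‖x‖) ^ (-(s + 1 / 2))) := by
          have heq : (1 + ‖↑x + ↑y * I‖) ^ (-(2 * s)) =
              (1 + ‖↑x + ↑y * I‖) ^ (-(s - 1 / 2)) *
                (1 + ‖↑x + ↑y * I‖) ^ (-(s + 1 / 2)) := by
            rw [← Real.rpow_add (by positivity)]
            ring_nf
          rw [heq]
          apply mul_le_mul
          · exact Real.rpow_le_rpow_of_nonpos (by positivity) hA2 (by linarith)
          · rw [Real.norm_eq_abs]
            exact Real.rpow_le_rpow_of_nonpos (by positivity) hA1 (by linarith)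
          · positivity
          · positivity
        calc ‖g (↑x + ↑y * I)‖ ≤
            C * (1 + ‖↑x + ↑y * I‖) ^ (-(2 * s)) *
              Real.exp (2 * Real.pi * ξ * y) := hnorm x y hy
          _ ≤ C * (1 + ‖↑x + ↑y * I‖) ^ (-(2 * s)) * 1 := by
              have e1 : (0:ℝ) ≤ C * (1 + ‖↑x + ↑y * I‖) ^ (-(2 * s)) := by
                positivity
              nlinarith
          _ = C * (1 + ‖↑x + ↑y * I‖) ^ (-(2 * s)) := mul_one _
          _ ≤ C * ((1 + y) ^ (-(s - 1 / 2)) * ((1 + ‖x‖) ^ (-(s + 1 / 2)))) :=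
              mul_le_mul_of_nonneg_left hsplit hC.le
          _ = C * (1 + y) ^ (-(s - 1 / 2)) * ((1 + ‖x‖) ^ (-(s + 1 / 2))) := by ring
      calc ‖∫ x : ℝ, g (↑x + ↑y * I)‖ ≤
          ∫ x : ℝ, C * (1 + y) ^ (-(s - 1 / 2)) * ((1 + ‖x‖) ^ (-(s + 1 / 2))) :=
            norm_integral_le_of_norm_le (hKint.const_mul _) (ae_of_all _ hb)
        _ = C * (1 + y) ^ (-(s - 1 / 2)) * K := by
            rw [integral_const_mul]
    have hlim : Tendsto (fun y : ℝ => C * (1 + y) ^ (-(s - 1 / 2)) * K) atTop (𝓝 0) := by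
      have h1 : Tendsto (fun y : ℝ => (1 + y) ^ (-(s - 1 / 2))) atTop (𝓝 0) :=
        (tendsto_rpow_neg_atTop (by linarith)).comp
          (tendsto_atTop_add_const_left atTop 1 tendsto_id)
      simpa using (h1.const_mul C).mul_const K
    have hle : ‖∫ x : ℝ, g (↑x + ↑y₀ * I)‖ ≤ 0 := by
      apply ge_of_tendsto hlim
      filter_upwards [eventually_gt_atTop (0 : ℝ)] with y hy
      rw [hconst y₀ y hy₀ hy]
      exact hFb y hy
    simpa using le_antisymm hle (norm_nonneg _)
  simp only [hgdef] at hint hconst hvan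
  exact ⟨hint, hconst, hvan⟩
end

section
/- Let Φ be a polynomial with complex coefficients, let m ≥ 1 and 0 ≤ r ≤ m be integers, and suppose Φ^{(j)}(1) = 0 for every integer r ≤ j ≤ m−1. Then for every ξ in the closed unit disk of ℂ: |Φ^{(r)}(ξ)| ≤ |ξ−1|^{m−r} · ∫_{[0,1]^{m−r}} |Φ^{(m)}( t₁⋯t_{m−r}·(ξ−1) + 1 )| dt₁ ⋯ dt_{m−r}. -/
set_option maxHeartbeats 1000000

open MeasureTheory Complex

private lemma pi_restrict_eq (k : ℕ) :
    (Measure.pi fun _ : Fin k => (volume : Measure ℝ).restrict (Set.Icc 0 1)) =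
      (volume : Measure (Fin k → ℝ)).restrict
        (Set.univ.pi fun _ => Set.Icc (0 : ℝ) 1) := by
  rw [volume_pi]
  refine Measure.pi_eq fun s hs => ?_
  rw [Measure.restrict_apply (MeasurableSet.univ_pi hs), ← Set.pi_inter_distrib, Measure.pi_pi]
  simp_rw [Measure.restrict_apply (hs _)]

private lemma ftc_step (P : Polynomial ℂ) (ξ : ℂ) (hP : P.eval 1 = 0) :
    P.eval ξ =
      (∫ s in Set.Icc (0:ℝ) 1, (Polynomial.derivative P).eval ((s : ℂ) * (ξ - 1) + 1)) * (ξ - 1) := by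
  have hd : ∀ s : ℝ, HasDerivAt (fun u : ℝ => P.eval ((u : ℂ) * (ξ - 1) + 1))
      ((Polynomial.derivative P).eval ((s : ℂ) * (ξ - 1) + 1) * (ξ - 1)) s := by
    intro s
    have h1 : HasDerivAt (fun z : ℂ => P.eval (z * (ξ - 1) + 1))
        ((Polynomial.derivative P).eval ((s : ℂ) * (ξ - 1) + 1) * (ξ - 1)) (s : ℂ) := by
      have := (P.hasDerivAt ((s : ℂ) * (ξ - 1) + 1)).comp (s : ℂ)
        (((hasDerivAt_id (s : ℂ)).mul_const (ξ - 1)).add_const 1)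
      simpa [Function.comp_def] using this
    exact h1.comp_ofReal
  have hcont : Continuous fun s : ℝ =>
      (Polynomial.derivative P).eval ((s : ℂ) * (ξ - 1) + 1) * (ξ - 1) := by
    fun_prop
  have hint := intervalIntegral.integral_eq_sub_of_hasDerivAt
    (f := fun u : ℝ => P.eval ((u : ℂ) * (ξ - 1) + 1))
    (f' := fun s : ℝ => (Polynomial.derivative P).eval ((s : ℂ) * (ξ - 1) + 1) * (ξ - 1))
    (fun x _ => hd x) (hcont.intervalIntegrable 0 1)
  simp only [Complex.ofReal_one, Complex.ofReal_zero, one_mul, zero_mul, zero_add,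
    sub_add_cancel, hP, sub_zero] at hint
  rw [← hint, intervalIntegral.integral_of_le zero_le_one,
    ← MeasureTheory.integral_Icc_eq_integral_Ioc, integral_mul_const]

private lemma key_s10 (k : ℕ) : ∀ (P : Polynomial ℂ),
    (∀ j, j < k → ((Polynomial.derivative)^[j] P).eval 1 = 0) → ∀ ξ : ℂ,
    ‖P.eval ξ‖ ≤ ‖ξ - 1‖ ^ k *
      ∫ t in Set.univ.pi (fun _ : Fin k => Set.Icc (0 : ℝ) 1),
        ‖((Polynomial.derivative)^[k] P).eval ((∏ i, ((t i : ℝ) : ℂ)) * (ξ - 1) + 1)‖ := by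
  induction k with
  | zero =>
    intro P _ ξ
    rw [← pi_restrict_eq, Measure.pi_of_empty _ (fun i => i.elim0), integral_dirac]
    simp
  | succ k IH =>
    intro P hP ξ
    set ν : Measure ℝ := volume.restrict (Set.Icc 0 1) with hν
    set μk : Measure (Fin k → ℝ) := Measure.pi fun _ => ν with hμk
    haveI : IsProbabilityMeasure ν := ⟨by simp [hν]⟩
    have h1 : P.eval 1 = 0 := by simpa using hP 0 (Nat.succ_pos k)
    have hP' : ∀ j, j < k → ((Polynomial.derivative)^[j] (Polynomial.derivative P)).eval 1 = 0 := by
      intro j hj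
      have := hP (j + 1) (by omega)
      rwa [Function.iterate_succ_apply] at this
    -- step (a): FTC bound
    have ha : ‖P.eval ξ‖ ≤
        (∫ s in Set.Icc (0:ℝ) 1, ‖(Polynomial.derivative P).eval ((s : ℂ) * (ξ - 1) + 1)‖) *
          ‖ξ - 1‖ := by
      rw [ftc_step P ξ h1]
      rw [norm_mul]
      gcongr
      exact norm_integral_le_integral_norm _
    -- integrability of the two-variable integrand
    set D : Polynomial ℂ := (Polynomial.derivative)^[k + 1] P with hD
    set G : ℝ × (Fin k → ℝ) → ℝ :=
      fun p => ‖D.eval (((p.1 : ℂ) * ∏ i, ((p.2 i : ℝ) : ℂ)) * (ξ - 1) + 1)‖ with hG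
    have hGcont : Continuous G := by fun_prop
    have hGint : Integrable G (ν.prod μk) := by
      rw [hν, hμk, pi_restrict_eq, Measure.prod_restrict]
      exact hGcont.continuousOn.integrableOn_compact
        (isCompact_Icc.prod (isCompact_univ_pi fun _ => isCompact_Icc))
    -- step (b): pointwise bound from the induction hypothesis
    have hb : ∀ s ∈ Set.Icc (0:ℝ) 1,
        ‖(Polynomial.derivative P).eval ((s : ℂ) * (ξ - 1) + 1)‖ ≤
          ‖ξ - 1‖ ^ k * ∫ t, G (s, t) ∂μk := by
      intro s hs
      have := IH (Polynomial.derivative P) hP' ((s : ℂ) * (ξ - 1) + 1)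
      rw [add_sub_cancel_right] at this
      refine this.trans ?_
      rw [hμk, hν, pi_restrict_eq]
      have hint_eq : (∫ t in Set.univ.pi fun _ : Fin k => Set.Icc (0:ℝ) 1,
            ‖((Polynomial.derivative)^[k] (Polynomial.derivative P)).eval
              ((∏ i, ((t i : ℝ) : ℂ)) * ((s : ℂ) * (ξ - 1)) + 1)‖)
          = ∫ t in Set.univ.pi fun _ : Fin k => Set.Icc (0:ℝ) 1, G (s, t) := by
        refine integral_congr_ae (Filter.Eventually.of_forall fun t => ?_)
        have harg : (∏ i, ((t i : ℝ) : ℂ)) * ((s : ℂ) * (ξ - 1)) =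
            ((s : ℂ) * ∏ i, ((t i : ℝ) : ℂ)) * (ξ - 1) := by ring
        dsimp only [hG, hD]
        rw [← Function.iterate_succ_apply, harg]
      rw [hint_eq]
      have hsle : ‖(s : ℂ)‖ ≤ 1 := by
        rw [Complex.norm_real, Real.norm_of_nonneg hs.1]; exact hs.2
      have habs : ‖(s : ℂ) * (ξ - 1)‖ ≤ ‖ξ - 1‖ := by
        rw [norm_mul]
        exact mul_le_of_le_one_left (norm_nonneg _) hsle
      exact mul_le_mul_of_nonneg_right
        (pow_le_pow_left₀ (norm_nonneg _) habs k)
        (integral_nonneg fun t => norm_nonneg _)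
    -- monotonicity of the outer integral
    have hmono : (∫ s in Set.Icc (0:ℝ) 1, ‖(Polynomial.derivative P).eval ((s : ℂ) * (ξ - 1) + 1)‖)
        ≤ ∫ s, (‖ξ - 1‖ ^ k * ∫ t, G (s, t) ∂μk) ∂ν := by
      refine integral_mono_of_nonneg (Filter.Eventually.of_forall fun s => norm_nonneg _)
        ((hGint.integral_prod_left).const_mul _) ?_
      exact (ae_restrict_iff' measurableSet_Icc).2 (Filter.Eventually.of_forall hb)
    -- Fubini
    have hfub : ∫ s, (∫ t, G (s, t) ∂μk) ∂ν = ∫ p, G p ∂(ν.prod μk) := by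
      rw [integral_integral hGint]
    -- rearranging to an integral over the cube in `k+1` variables
    have hprod : ∫ p, G p ∂(ν.prod μk) =
        ∫ u, ‖D.eval ((∏ i, ((u i : ℝ) : ℂ)) * (ξ - 1) + 1)‖
          ∂(Measure.pi fun _ : Fin (k + 1) => ν) := by
      rw [← (measurePreserving_piFinSuccAbove (fun _ : Fin (k + 1) => ν) 0).integral_comp' G]
      refine integral_congr_ae (Filter.Eventually.of_forall fun u => ?_)
      simp only [hG, MeasurableEquiv.piFinSuccAbove, MeasurableEquiv.coe_mk, Equiv.coe_fn_mk]
      rw [Fin.prod_univ_succ]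
      simp [Fin.tail, Fin.zero_succAbove]
    calc ‖P.eval ξ‖
        ≤ (∫ s in Set.Icc (0:ℝ) 1,
            ‖(Polynomial.derivative P).eval ((s : ℂ) * (ξ - 1) + 1)‖) * ‖ξ - 1‖ := ha
      _ ≤ (‖ξ - 1‖ ^ k * ∫ p, G p ∂(ν.prod μk)) * ‖ξ - 1‖ := by
          refine mul_le_mul_of_nonneg_right ?_ (norm_nonneg _)
          calc (∫ s in Set.Icc (0:ℝ) 1,
                ‖(Polynomial.derivative P).eval ((s : ℂ) * (ξ - 1) + 1)‖)
              ≤ ∫ s, (‖ξ - 1‖ ^ k * ∫ t, G (s, t) ∂μk) ∂ν := hmono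
            _ = ‖ξ - 1‖ ^ k * ∫ s, (∫ t, G (s, t) ∂μk) ∂ν := by
                rw [integral_const_mul]
            _ = ‖ξ - 1‖ ^ k * ∫ p, G p ∂(ν.prod μk) := by rw [hfub]
      _ = ‖ξ - 1‖ ^ (k + 1) *
            ∫ u, ‖D.eval ((∏ i, ((u i : ℝ) : ℂ)) * (ξ - 1) + 1)‖
              ∂(Measure.pi fun _ : Fin (k + 1) => ν) := by rw [hprod]; ring
      _ = ‖ξ - 1‖ ^ (k + 1) *
            ∫ u in Set.univ.pi (fun _ : Fin (k + 1) => Set.Icc (0 : ℝ) 1),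
              ‖D.eval ((∏ i, ((u i : ℝ) : ℂ)) * (ξ - 1) + 1)‖ := by
          rw [hν, pi_restrict_eq]

/-- Taylor-remainder estimate on the closed unit disk: if
`Φ^{(j)}(1) = 0` for `r ≤ j ≤ m−1`, then for `ξ` in the closed unit disk,
`|Φ^{(r)}(ξ)| ≤ |ξ−1|^{m−r} ∫_{[0,1]^{m−r}} |Φ^{(m)}(t₁⋯t_{m−r}(ξ−1)+1)| dt`. -/
theorem stmt_10 (Φ : Polynomial ℂ) (m r : ℕ) (hm : 1 ≤ m) (hr : r ≤ m)
    (h : ∀ j : ℕ, r ≤ j → j ≤ m - 1 → ((Polynomial.derivative)^[j] Φ).eval 1 = 0) :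
    ∀ ξ : ℂ, ‖ξ‖ ≤ 1 →
      ‖((Polynomial.derivative)^[r] Φ).eval ξ‖ ≤
        ‖ξ - 1‖ ^ (m - r) *
          ∫ t in Set.univ.pi (fun _ : Fin (m - r) => Set.Icc (0 : ℝ) 1),
            ‖((Polynomial.derivative)^[m] Φ).eval ((∏ i, ((t i : ℝ) : ℂ)) * (ξ - 1) + 1)‖ := by
  intro ξ _
  have hk := key_s10 (m - r) ((Polynomial.derivative)^[r] Φ) ?_ ξ
  · rwa [← Function.iterate_add_apply, Nat.sub_add_cancel hr] at hk
  · intro j hj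
    rw [← Function.iterate_add_apply]
    exact h (j + r) (by omega) (by omega)
end

section
/- Let ν ≥ 1 be real and T > 0. Let f and u be holomorphic on the upper half-plane ℍ with ∫_ℍ |f(x+iy)|² y^{ν−1} dx dy < ∞ and ∫_ℍ |u(x+iy)|² y^{ν−1} dx dy < ∞, and suppose f(·+iy) ∈ L¹(ℝ) for every y > 0. If u(z−T) − u(z) = ∫_{−T}^0 f(z+t) dt for every z ∈ ℍ, then u'(z) = −f(z) for every z ∈ ℍ. -/
open MeasureTheory Complex Filter Set intervalIntegral

lemma tail_tendsto_zero {w : ℝ → ℝ} (hw : Integrable w) :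
    Tendsto (fun A : ℝ => ∫ s in Set.Ioi A, w s) atTop (nhds 0) := by
  have h1 : Tendsto (fun A : ℝ => ∫ s in (0:ℝ)..A, w s) atTop
      (nhds (∫ s in Set.Ioi (0:ℝ), w s)) :=
    intervalIntegral_tendsto_integral_Ioi 0 hw.integrableOn tendsto_id
  have h2 : Tendsto (fun A : ℝ => (∫ s in Set.Ioi (0:ℝ), w s) - ∫ s in (0:ℝ)..A, w s)
      atTop (nhds 0) := by
    simpa using h1.const_sub (∫ s in Set.Ioi (0:ℝ), w s)
  refine h2.congr' ?_
  filter_upwards [eventually_ge_atTop (0:ℝ)] with A hA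
  have hsplit : ∫ s in Set.Ioi (0:ℝ), w s
      = (∫ s in Set.Ioc 0 A, w s) + ∫ s in Set.Ioi A, w s := by
    rw [← Set.Ioc_union_Ioi_eq_Ioi hA,
      MeasureTheory.setIntegral_union (Set.Ioc_disjoint_Ioi le_rfl) measurableSet_Ioi
        hw.integrableOn hw.integrableOn]
  rw [intervalIntegral.integral_of_le hA, hsplit]
  ring

lemma line_lemma {T : ℝ} (hT : 0 < T) {v g : ℝ → ℂ}
    (hv_cont : Continuous v) (hg : Integrable g) (hg_cont : Continuous g)
    (hv2 : Integrable (fun x => ‖v x‖ ^ 2))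
    (hper : ∀ x : ℝ, v (x - T) - v x = ∫ s in (x - T)..x, g s) :
    ∀ x : ℝ, HasDerivAt v (-g x) x := by
  set F : ℝ → ℂ := fun x => ∫ s in (0:ℝ)..x, g s with hFdef
  have hgi : ∀ a b : ℝ, IntervalIntegrable g volume a b := fun a b => hg.intervalIntegrable
  have hF' : ∀ x : ℝ, HasDerivAt F (g x) x := fun x =>
    intervalIntegral.integral_hasDerivAt_right (hgi 0 x)
      (hg_cont.aestronglyMeasurable.stronglyMeasurableAtFilter) hg_cont.continuousAt
  set G : ℝ → ℂ := fun x => v x + F x with hGdef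
  have hGper : ∀ x, G (x - T) = G x := by
    intro x
    have h1 := hper x
    have h2 : F x - F (x - T) = ∫ s in (x - T)..x, g s :=
      intervalIntegral.integral_interval_sub_left (hgi 0 x) (hgi 0 (x - T))
    rw [← h2] at h1
    simp only [hGdef]
    linear_combination h1
  have hGn : ∀ n : ℕ, ∀ x : ℝ, G (x + n * T) = G x := by
    intro n
    induction n with
    | zero => intro x; norm_num
    | succ n ih =>
      intro x
      have h1 := hGper (x + (n + 1 : ℕ) * T)
      have e : x + (n + 1 : ℕ) * T - T = x + n * T := by push_cast; ring
      rw [e] at h1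
      rw [← h1, ih]
  have hGcont : Continuous G :=
    hv_cont.add (continuous_iff_continuousAt.mpr fun x => (hF' x).continuousAt)
  set L : ℂ := ∫ s in Set.Ioi (0:ℝ), g s with hLdef
  have hFL : Tendsto F atTop (nhds L) :=
    intervalIntegral_tendsto_integral_Ioi 0 hg.integrableOn tendsto_id
  have hGL : ∀ x : ℝ, G x = L := by
    intro x
    by_contra hc
    set c : ℂ := G x - L with hcdef
    have hc0 : c ≠ 0 := sub_ne_zero.mpr hc
    have hcpos : 0 < ‖c‖ := norm_pos_iff.mpr hc0
    obtain ⟨δ, hδpos, hδ⟩ : ∃ δ > 0, ∀ s : ℝ, |s - x| ≤ δ → ‖G s - G x‖ ≤ ‖c‖ / 4 := by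
      obtain ⟨δ, hδ, h⟩ := Metric.continuousAt_iff.mp hGcont.continuousAt (‖c‖ / 4)
        (by positivity)
      refine ⟨δ / 2, by positivity, fun s hs => ?_⟩
      have := h (show dist s x < δ by rw [Real.dist_eq]; linarith)
      rw [dist_eq_norm] at this
      linarith
    obtain ⟨R, hR⟩ : ∃ R : ℝ, ∀ r ≥ R, ‖F r - L‖ ≤ ‖c‖ / 4 := by
      have := (hFL.eventually (Metric.ball_mem_nhds L (show (0:ℝ) < ‖c‖ / 4 by positivity)))
      rw [eventually_atTop] at this
      obtain ⟨R, hR⟩ := this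
      refine ⟨R, fun r hr => ?_⟩
      have := hR r hr
      rw [← dist_eq_norm]
      exact le_of_lt this
    obtain ⟨A₀, hA₀⟩ : ∃ A₀ : ℝ, ∀ A ≥ A₀, ∫ s in Set.Ioi A, ‖v s‖ ^ 2 < δ * ‖c‖ ^ 2 / 2 := by
      have := (tail_tendsto_zero hv2).eventually
        (Metric.ball_mem_nhds (0:ℝ) (show (0:ℝ) < δ * ‖c‖ ^ 2 / 2 by positivity))
      rw [eventually_atTop] at this
      obtain ⟨A₀, hA₀⟩ := this
      refine ⟨A₀, fun A hA => ?_⟩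
      have h := hA₀ A hA
      rw [Real.dist_eq, sub_zero] at h
      exact lt_of_le_of_lt (le_abs_self _) h
    obtain ⟨n, hn⟩ := exists_nat_ge ((max R A₀ - (x - δ)) / T)
    set a : ℝ := x - δ + n * T with hadef
    have han : max R A₀ ≤ a := by
      have h1 : max R A₀ - (x - δ) ≤ n * T := by
        have := mul_le_mul_of_nonneg_right hn hT.le
        rwa [div_mul_cancel₀ _ hT.ne'] at this
      simp only [hadef]; linarith
    have hlow : ∀ s ∈ Set.Ioc a (a + 2 * δ), (‖c‖ / 2) ^ 2 ≤ ‖v s‖ ^ 2 := by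
      intro s hs
      obtain ⟨hs1, hs2⟩ := hs
      have hGs : G s = G (s - n * T) := by
        have := hGn n (s - n * T)
        rw [sub_add_cancel] at this
        exact this
      have hv : v s = c + (G (s - n * T) - G x) - (F s - L) := by
        have h0 : G s = v s + F s := rfl
        rw [hGs] at h0
        rw [hcdef]
        linear_combination -h0
      have h1 : ‖G (s - n * T) - G x‖ ≤ ‖c‖ / 4 := by
        refine hδ _ ?_
        rw [abs_le]
        constructor <;> simp only [hadef] at hs1 hs2 <;> [linarith; linarith]
      have h2 : ‖F s - L‖ ≤ ‖c‖ / 4 := by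
        refine hR s ?_
        have := le_trans (le_max_left R A₀) han
        linarith
      have h3 : ‖c‖ / 2 ≤ ‖v s‖ := by
        rw [hv]
        set d : ℂ := G (s - n * T) - G x with hddef
        have t1 : ‖c + d‖ - ‖F s - L‖ ≤ ‖c + d - (F s - L)‖ :=
          norm_sub_norm_le (c + d) (F s - L)
        have t3 : ‖c‖ ≤ ‖c + d‖ + ‖d‖ := by
          simpa using norm_add_le (c + d) (-d)
        linarith
      have := pow_le_pow_left₀ (by positivity : (0:ℝ) ≤ ‖c‖ / 2) h3 2
      exact this
    have hvol : (volume (Set.Ioc a (a + 2 * δ))).toReal = 2 * δ := by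
      rw [Real.volume_Ioc, ENNReal.toReal_ofReal (by linarith)]
      ring
    have h3 : (‖c‖ / 2) ^ 2 * (2 * δ) ≤ ∫ s in Set.Ioc a (a + 2 * δ), ‖v s‖ ^ 2 := by
      have h := setIntegral_ge_of_const_le measurableSet_Ioc
        (measure_Ioc_lt_top).ne hlow hv2.integrableOn
      rw [measureReal_def, hvol, smul_eq_mul] at h
      linarith [mul_comm ((‖c‖ / 2) ^ 2) (2 * δ)]
    have h4 : (∫ s in Set.Ioc a (a + 2 * δ), ‖v s‖ ^ 2) ≤ ∫ s in Set.Ioi a, ‖v s‖ ^ 2 := by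
      apply setIntegral_mono_set hv2.integrableOn
      · filter_upwards with s using by positivity
      · exact HasSubset.Subset.eventuallyLE Set.Ioc_subset_Ioi_self
    have h5 := hA₀ a (le_trans (le_max_right R A₀) han)
    have he : (‖c‖ / 2) ^ 2 * (2 * δ) = δ * ‖c‖ ^ 2 / 2 := by ring
    linarith
  have hvF : v = fun x => L - F x := by
    funext x
    have h0 : v x + F x = L := hGL x
    linear_combination h0
  intro x
  have h := (hF' x).const_sub L
  rw [hvF]
  exact h

set_option maxHeartbeats 1000000 in
/-- Discrete-series version of Proposition on `A_T`:
if `f, u` are holomorphic on the upper half-plane, square-integrable for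
`y^{ν−1} dx dy` (`ν ≥ 1`), `f(·+iy) ∈ L¹(ℝ)` for all `y > 0`, and
`u(z−T) − u(z) = ∫_{−T}^0 f(z+t) dt` on the upper half-plane, then
`u' = −f` there. -/
theorem stmt_12 (ν T : ℝ) (hν : 1 ≤ ν) (hT : 0 < T) (f u : ℂ → ℂ)
    (hf : DifferentiableOn ℂ f {z : ℂ | 0 < z.im})
    (hu : DifferentiableOn ℂ u {z : ℂ | 0 < z.im})
    (hfL2 : IntegrableOn
      (fun p : ℝ × ℝ => ‖f (p.1 + p.2 * I)‖ ^ 2 * p.2 ^ (ν - 1))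
      (Set.univ ×ˢ Set.Ioi (0 : ℝ)))
    (huL2 : IntegrableOn
      (fun p : ℝ × ℝ => ‖u (p.1 + p.2 * I)‖ ^ 2 * p.2 ^ (ν - 1))
      (Set.univ ×ˢ Set.Ioi (0 : ℝ)))
    (hfL1 : ∀ y : ℝ, 0 < y → Integrable (fun x : ℝ => f (x + y * I)))
    (heq : ∀ z : ℂ, 0 < z.im → u (z - (T : ℂ)) - u z = ∫ t in (-T)..0, f (z + (t : ℂ))) :
    ∀ z : ℂ, 0 < z.im → deriv u z = -f z := by
  have hUopen : IsOpen {z : ℂ | 0 < z.im} := isOpen_lt continuous_const Complex.continuous_im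
  have hmem : ∀ (x y : ℝ), 0 < y → ((x : ℂ) + (y : ℂ) * I) ∈ {z : ℂ | 0 < z.im} := by
    intro x y hy
    simp [Complex.add_im, Complex.mul_im]
    exact hy
  -- per-line result
  have hline : ∀ y : ℝ, 0 < y → Integrable (fun x : ℝ => ‖u ((x : ℂ) + (y : ℂ) * I)‖ ^ 2) →
      ∀ x : ℝ, deriv u ((x : ℂ) + (y : ℂ) * I) = -f ((x : ℂ) + (y : ℂ) * I) := by
    intro y hy hint x
    set fy : ℝ → ℂ := fun s => f ((s : ℂ) + (y : ℂ) * I) with hfydef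
    set uy : ℝ → ℂ := fun s => u ((s : ℂ) + (y : ℂ) * I) with huydef
    have hmap : ∀ s : ℝ, ((s : ℂ) + (y : ℂ) * I) ∈ {z : ℂ | 0 < z.im} := fun s => hmem s y hy
    have hcm : Continuous fun s : ℝ => (s : ℂ) + (y : ℂ) * I := by continuity
    have hfyc : Continuous fy := hf.continuousOn.comp_continuous hcm hmap
    have huyc : Continuous uy := hu.continuousOn.comp_continuous hcm hmap
    have hfyi : Integrable fy := hfL1 y hy
    have hper : ∀ x : ℝ, uy (x - T) - uy x = ∫ s in (x - T)..x, fy s := by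
      intro x
      have h0 := heq ((x : ℂ) + (y : ℂ) * I) (hmap x)
      have e1 : ((x : ℂ) + (y : ℂ) * I) - (T : ℂ) = ((x - T : ℝ) : ℂ) + (y : ℂ) * I := by
        push_cast; ring
      rw [e1] at h0
      have e2 : (∫ t in (-T)..(0:ℝ), f (((x : ℂ) + (y : ℂ) * I) + (t : ℂ)))
          = ∫ t in (-T)..(0:ℝ), fy (t + x) := by
        refine intervalIntegral.integral_congr fun t _ => ?_
        simp only [hfydef]
        congr 1
        push_cast; ring
      rw [e2] at h0
      rw [show uy (x - T) = u (((x - T : ℝ) : ℂ) + (y : ℂ) * I) from rfl]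
      rw [h0, intervalIntegral.integral_comp_add_right fy x]
      congr 1 <;> ring
    have hD := line_lemma hT huyc hfyi hfyc hint hper x
    have hz : ((x : ℂ) + (y : ℂ) * I) ∈ {z : ℂ | 0 < z.im} := hmap x
    have hdu : HasDerivAt u (deriv u ((x : ℂ) + (y : ℂ) * I)) ((x : ℂ) + (y : ℂ) * I) :=
      (hu.differentiableAt (hUopen.mem_nhds hz)).hasDerivAt
    have htrans : HasDerivAt (fun w : ℂ => u (w + (y : ℂ) * I))
        (deriv u ((x : ℂ) + (y : ℂ) * I)) (x : ℂ) := by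
      have h1 : HasDerivAt (fun w : ℂ => w + (y : ℂ) * I) 1 (x : ℂ) :=
        (hasDerivAt_id _).add_const _
      have h2 := HasDerivAt.comp (x : ℂ) hdu h1
      rw [mul_one] at h2
      exact h2
    have huy' : HasDerivAt uy (deriv u ((x : ℂ) + (y : ℂ) * I)) x := htrans.comp_ofReal
    have := hD.unique huy'
    rw [this]
  -- a.e. slicing
  have hprod : Integrable (fun p : ℝ × ℝ => ‖u (p.1 + p.2 * I)‖ ^ 2 * p.2 ^ (ν - 1))
      (volume.prod (volume.restrict (Set.Ioi (0 : ℝ)))) := by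
    have h := huL2
    rw [IntegrableOn, Measure.volume_eq_prod, ← Measure.prod_restrict,
      Measure.restrict_univ] at h
    exact h
  have hae : ∀ᵐ (y : ℝ) ∂(volume.restrict (Set.Ioi (0 : ℝ))),
      Integrable (fun x : ℝ => ‖u ((x : ℂ) + (y : ℂ) * I)‖ ^ 2 * y ^ (ν - 1)) :=
    hprod.prod_left_ae
  have hae2 : ∀ᵐ y : ℝ, y ∈ Set.Ioi (0:ℝ) →
      ∀ x : ℝ, deriv u ((x : ℂ) + (y : ℂ) * I) = -f ((x : ℂ) + (y : ℂ) * I) := by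
    rw [ae_restrict_iff' measurableSet_Ioi] at hae
    filter_upwards [hae] with y h hy
    have hy' : (0 : ℝ) < y := hy
    have hpow : (0 : ℝ) < y ^ (ν - 1) := Real.rpow_pos_of_pos hy' _
    have hint : Integrable (fun x : ℝ => ‖u ((x : ℂ) + (y : ℂ) * I)‖ ^ 2) := by
      have h2 := (h hy).mul_const (y ^ (ν - 1))⁻¹
      have e : (fun x : ℝ => ‖u ((x : ℂ) + (y : ℂ) * I)‖ ^ 2 * y ^ (ν - 1) * (y ^ (ν - 1))⁻¹)
          = fun x : ℝ => ‖u ((x : ℂ) + (y : ℂ) * I)‖ ^ 2 := by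
        funext x
        rw [mul_assoc, mul_inv_cancel₀ hpow.ne', mul_one]
      rwa [e] at h2
    exact hline y hy' hint
  -- frequently zero near I
  have hfreq : ∃ᶠ z in nhdsWithin I {I}ᶜ, deriv u z + f z = 0 := by
    have hfy : ∃ᶠ y : ℝ in nhdsWithin (1:ℝ) (Set.Ioi 1),
        ∀ x : ℝ, deriv u ((x : ℂ) + (y : ℂ) * I) = -f ((x : ℂ) + (y : ℂ) * I) := by
      by_contra hcon
      rw [Filter.not_frequently] at hcon
      obtain ⟨b, hb1, hb⟩ := mem_nhdsGT_iff_exists_Ioo_subset.mp hcon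
      have hnull : volume {y : ℝ | ¬ (y ∈ Set.Ioi (0:ℝ) →
          ∀ x : ℝ, deriv u ((x : ℂ) + (y : ℂ) * I) = -f ((x : ℂ) + (y : ℂ) * I))} = 0 :=
        hae2
      have hsub : Set.Ioo (1:ℝ) b ⊆ {y : ℝ | ¬ (y ∈ Set.Ioi (0:ℝ) →
          ∀ x : ℝ, deriv u ((x : ℂ) + (y : ℂ) * I) = -f ((x : ℂ) + (y : ℂ) * I))} := by
        intro y hy
        have h1 : y ∈ Set.Ioi (0:ℝ) := lt_trans one_pos hy.1
        have h2 := hb hy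
        simp only [Set.mem_setOf_eq, Set.mem_compl_iff] at h2 ⊢
        intro hcontra
        exact h2 (hcontra h1)
      have := measure_mono_null hsub hnull
      rw [Real.volume_Ioo] at this
      have hb1' : (1:ℝ) < b := hb1
      simp only [ENNReal.ofReal_eq_zero] at this
      linarith
    have hmapt : Tendsto (fun y : ℝ => (y : ℂ) * I) (nhdsWithin (1:ℝ) (Set.Ioi 1))
        (nhdsWithin I {I}ᶜ) := by
      apply tendsto_nhdsWithin_of_tendsto_nhds_of_eventually_within
      · have hc : Continuous fun y : ℝ => (y : ℂ) * I :=
          Complex.continuous_ofReal.mul continuous_const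
        have := hc.tendsto 1
        simp only [Complex.ofReal_one, one_mul] at this
        exact this.mono_left nhdsWithin_le_nhds
      · filter_upwards [self_mem_nhdsWithin] with y hy
        simp only [Set.mem_compl_iff, Set.mem_singleton_iff]
        intro h
        have him : ((y : ℂ) * I).im = Complex.I.im := by rw [h]
        simp only [Complex.mul_im, Complex.ofReal_re, Complex.I_im, Complex.ofReal_im,
          Complex.I_re, mul_one, mul_zero, add_zero] at him
        have : (1:ℝ) < y := hy
        linarith
    have hfy2 : ∃ᶠ y : ℝ in nhdsWithin (1:ℝ) (Set.Ioi 1),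
        deriv u ((y : ℂ) * I) + f ((y : ℂ) * I) = 0 := by
      refine hfy.mono fun y hy => ?_
      have := hy 0
      simp only [Complex.ofReal_zero, zero_add] at this
      rw [this]
      ring
    exact hmapt.frequently hfy2
  -- identity theorem
  have hUpre : IsPreconnected {z : ℂ | 0 < z.im} := (convex_halfSpace_im_gt 0).isPreconnected
  have hanal : AnalyticOnNhd ℂ (fun z => deriv u z + f z) {z : ℂ | 0 < z.im} := by
    have h1 : AnalyticOnNhd ℂ u {z : ℂ | 0 < z.im} := hu.analyticOnNhd hUopen
    have h2 : AnalyticOnNhd ℂ f {z : ℂ | 0 < z.im} := hf.analyticOnNhd hUopen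
    exact h1.deriv.add h2
  have hI : I ∈ {z : ℂ | 0 < z.im} := by simp
  have hEq := hanal.eqOn_zero_of_preconnected_of_frequently_eq_zero hUpre hI hfreq
  intro z hz
  have h := hEq hz
  simp only [Pi.zero_apply] at h
  linear_combination h
end

section
/- Let ν = 1 (so n = 1, μ = 0, u_k(z) = ((z−i)/(z+i))^{k−1}(z+i)^{−2} and ‖u_k‖² = π/(4k)), and let ε > 0. Let f = Σ_{k≥1} c_k u_k ∈ L²(ℍ, dλ_1) with ‖f‖_{1+ε}² = Σ_{k≥1} |c_k|² (1+8k²)^{1+ε} ‖u_k‖² < ∞. Then there is a constant C > 0 depending only on ε such that for all z ∈ ℍ: |f(z)| ≤ C ‖f‖_{1+ε} (1+|z|)^{−2}. -/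
open MeasureTheory Complex

/-- Cauchy–Schwarz for tsum. -/
lemma tsum_cs (x y : ℕ → ℝ) (hx : ∀ j, 0 ≤ x j) (hy : ∀ j, 0 ≤ y j)
    (hx2 : Summable (fun j => x j ^ 2)) (hy2 : Summable (fun j => y j ^ 2)) :
    Summable (fun j => x j * y j) ∧
      ∑' j, x j * y j ≤ Real.sqrt (∑' j, x j ^ 2) * Real.sqrt (∑' j, y j ^ 2) := by
  have hsum : Summable (fun j => x j * y j) := by
    apply Summable.of_nonneg_of_le (fun j => mul_nonneg (hx j) (hy j))
      (fun j => ?_) ((hx2.add hy2).div_const 2)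
    nlinarith [sq_nonneg (x j - y j)]
  refine ⟨hsum, Summable.tsum_le_of_sum_le hsum fun s => ?_⟩
  calc ∑ j ∈ s, x j * y j
      ≤ Real.sqrt (∑ j ∈ s, x j ^ 2) * Real.sqrt (∑ j ∈ s, y j ^ 2) :=
        Real.sum_mul_le_sqrt_mul_sqrt s x y
    _ ≤ Real.sqrt (∑' j, x j ^ 2) * Real.sqrt (∑' j, y j ^ 2) := by
        exact mul_le_mul (Real.sqrt_le_sqrt (Summable.sum_le_tsum s (fun j _ => sq_nonneg _) hx2))
          (Real.sqrt_le_sqrt (Summable.sum_le_tsum s (fun j _ => sq_nonneg _) hy2))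
          (Real.sqrt_nonneg _) (Real.sqrt_nonneg _)

/-- Mock discrete series decay (`ν = 1`, `n = 1`, `μ = 0`): if
`f = Σ_{k≥1} c_k u_k` with `u_k(z) = ((z−i)/(z+i))^{k−1}(z+i)^{−2}`,
`‖u_k‖² = π/(4k)`, and `‖f‖_{1+ε}² = Σ_{k≥1} |c_k|²(1+8k²)^{1+ε}‖u_k‖² < ∞`,
then `|f(z)| ≤ C_ε ‖f‖_{1+ε} (1+|z|)^{−2}` on the upper half-plane.
(Here `c j` is the coefficient of `u_{j+1}`.) -/
theorem stmt_17 (ε : ℝ) (hε : 0 < ε) :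
    ∃ C > (0 : ℝ), ∀ (c : ℕ → ℂ) (f : ℂ → ℂ),
      (∀ z : ℂ, 0 < z.im →
        HasSum (fun j : ℕ => c j * (((z - I) / (z + I)) ^ j * (z + I) ^ (-2 : ℤ))) (f z)) →
      Summable (fun j : ℕ =>
        ‖c j‖ ^ 2 * (1 + 8 * ((j : ℝ) + 1) ^ 2) ^ (1 + ε) *
          (Real.pi / (4 * ((j : ℝ) + 1)))) →
      ∀ z : ℂ, 0 < z.im →
        ‖f z‖ ≤ C *
          Real.sqrt (∑' j : ℕ,
            ‖c j‖ ^ 2 * (1 + 8 * ((j : ℝ) + 1) ^ 2) ^ (1 + ε) *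
              (Real.pi / (4 * ((j : ℝ) + 1)))) *
          (1 + ‖z‖) ^ (-2 : ℤ) := by
  set a : ℕ → ℝ := fun j => (1 + 8 * ((j : ℝ) + 1) ^ 2) ^ (1 + ε) * (Real.pi / (4 * ((j : ℝ) + 1)))
    with ha_def
  have ha_pos : ∀ j, 0 < a j := fun j =>
    mul_pos (Real.rpow_pos_of_pos (by positivity) _) (by positivity)
  set b : ℕ → ℝ := fun j => (a j)⁻¹ with hb_def
  have hb_pos : ∀ j, 0 < b j := fun j => inv_pos.2 (ha_pos j)
  -- summability of b
  have hbsum : Summable b := by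
    have h1 : Summable (fun j : ℕ => (4 / Real.pi) * ((j : ℝ) + 1) ^ (-(1 + 2 * ε))) := by
      apply Summable.mul_left
      have h0 := (Real.summable_one_div_nat_rpow (p := 1 + 2 * ε)).2 (by linarith)
      have h2 := (summable_nat_add_iff 1).2 h0
      refine h2.congr fun j => ?_
      push_cast
      rw [Real.rpow_neg (by positivity), one_div]
    apply Summable.of_nonneg_of_le (fun j => (hb_pos j).le) (fun j => ?_) h1
    have ht : (0:ℝ) < (j:ℝ) + 1 := by positivity
    have key : (Real.pi / 4) * ((j:ℝ)+1) ^ (1 + 2*ε) ≤ a j := by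
      have h3 : ((j:ℝ)+1) ^ (1 + 2*ε) * ((j:ℝ)+1) ≤ (1 + 8 * ((j : ℝ) + 1) ^ 2) ^ (1 + ε) := by
        calc ((j:ℝ)+1) ^ (1 + 2*ε) * ((j:ℝ)+1)
            = ((j:ℝ)+1) ^ ((1 + 2*ε) + 1) := by
              rw [Real.rpow_add ht (1+2*ε) 1, Real.rpow_one]
          _ = ((j:ℝ)+1) ^ ((2:ℝ) * (1 + ε)) := by
              rw [show ((1 + 2*ε) + 1 : ℝ) = 2*(1+ε) by ring]
          _ = (((j:ℝ)+1) ^ (2:ℝ)) ^ (1 + ε) := Real.rpow_mul ht.le 2 (1+ε)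
          _ = ((((j:ℝ)+1) ^ 2 : ℝ)) ^ (1 + ε) := by
              rw [show ((2:ℝ)) = ((2:ℕ):ℝ) by norm_num, Real.rpow_natCast]
          _ ≤ (1 + 8 * ((j : ℝ) + 1) ^ 2) ^ (1 + ε) := by
              apply Real.rpow_le_rpow (by positivity) (by nlinarith [sq_nonneg ((j:ℝ)+1)])
                (by linarith)
      rw [ha_def]
      simp only
      calc (Real.pi/4) * ((j:ℝ)+1) ^ (1 + 2*ε)
          = ((j:ℝ)+1) ^ (1 + 2*ε) * ((j:ℝ)+1) * (Real.pi/(4*((j:ℝ)+1))) := by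
            field_simp
        _ ≤ (1 + 8 * ((j : ℝ) + 1) ^ 2) ^ (1 + ε) * (Real.pi/(4*((j:ℝ)+1))) :=
            mul_le_mul_of_nonneg_right h3 (by positivity)
    have heq : (4 / Real.pi) * ((j:ℝ)+1) ^ (-(1 + 2*ε)) =
        ((Real.pi / 4) * ((j:ℝ)+1) ^ (1 + 2*ε))⁻¹ := by
      rw [mul_inv, inv_div, Real.rpow_neg ht.le]
    rw [hb_def]
    simp only
    rw [heq]
    exact inv_anti₀ (by positivity) key
  set K : ℝ := ∑' j, b j with hK_def
  have hK_nonneg : 0 ≤ K := tsum_nonneg fun j => (hb_pos j).le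
  refine ⟨2 * Real.sqrt K + 1, by positivity, ?_⟩
  intro c f hf hsum z hz
  -- Cauchy–Schwarz setup
  set x : ℕ → ℝ := fun j => ‖c j‖ * Real.sqrt (a j) with hx_def
  set y : ℕ → ℝ := fun j => Real.sqrt (b j) with hy_def
  have hx2 : ∀ j, x j ^ 2 = ‖c j‖ ^ 2 * (1 + 8 * ((j : ℝ) + 1) ^ 2) ^ (1 + ε) *
      (Real.pi / (4 * ((j : ℝ) + 1))) := by
    intro j
    rw [hx_def]
    simp only
    rw [mul_pow, Real.sq_sqrt (ha_pos j).le, ha_def, ← mul_assoc]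
  have hxy : ∀ j, x j * y j = ‖c j‖ := by
    intro j
    rw [hx_def, hy_def]
    simp only
    rw [mul_assoc, ← Real.sqrt_mul (ha_pos j).le, hb_def]
    simp only
    rw [mul_inv_cancel₀ (ha_pos j).ne', Real.sqrt_one, mul_one]
  obtain ⟨hcs, hcsle⟩ := tsum_cs x y (fun j => mul_nonneg (norm_nonneg _) (Real.sqrt_nonneg _))
    (fun j => Real.sqrt_nonneg _)
    ((hsum.congr fun j => (hx2 j).symm))
    (hbsum.congr fun j => by rw [hy_def]; simp [Real.sq_sqrt (hb_pos j).le])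
  have hcsum : Summable (fun j => ‖c j‖) := hcs.congr hxy
  have hcbound : ∑' j, ‖c j‖ ≤ Real.sqrt (∑' j : ℕ,
      ‖c j‖ ^ 2 * (1 + 8 * ((j : ℝ) + 1) ^ 2) ^ (1 + ε) *
        (Real.pi / (4 * ((j : ℝ) + 1)))) * Real.sqrt K := by
    calc ∑' j, ‖c j‖ = ∑' j, x j * y j := tsum_congr fun j => (hxy j).symm
      _ ≤ Real.sqrt (∑' j, x j ^ 2) * Real.sqrt (∑' j, y j ^ 2) := hcsle
      _ = _ := by
          congr 1
          · exact congrArg Real.sqrt (tsum_congr hx2)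
          · refine congrArg Real.sqrt (tsum_congr fun j => ?_)
            rw [hy_def]; simp [Real.sq_sqrt (hb_pos j).le]
  -- geometry on the upper half plane
  have hzI : (0:ℝ) < ‖z + I‖ := by
    apply norm_pos_iff.2
    intro h
    have : (z + I).im = 0 := by rw [h]; simp
    simp only [Complex.add_im, Complex.I_im] at this
    linarith
  have hw : ‖(z - I) / (z + I)‖ ≤ 1 := by
    rw [norm_div, div_le_one hzI]
    have h1 : ‖z - I‖ ^ 2 ≤ ‖z + I‖ ^ 2 := by
      rw [Complex.sq_norm, Complex.sq_norm, Complex.normSq_apply, Complex.normSq_apply]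
      simp only [Complex.sub_re, Complex.sub_im, Complex.add_re, Complex.add_im,
        Complex.I_re, Complex.I_im]
      nlinarith
    exact (pow_le_pow_iff_left₀ (norm_nonneg _) (norm_nonneg _) two_ne_zero).1 h1
  have h2 : ∀ x : ℝ, x ^ (-2:ℤ) = (x^2)⁻¹ := fun x => by
    rw [zpow_neg, zpow_two, sq]
  have hBpos : (0:ℝ) < 1 + ‖z‖ :=
    add_pos_of_pos_of_nonneg one_pos (norm_nonneg z)
  have hzpow : ‖z + I‖ ^ (-2:ℤ) ≤ 2 * (1 + ‖z‖) ^ (-2:ℤ) := by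
    rw [h2, h2]
    have hA2 : ‖z + I‖ ^ 2 = z.re ^ 2 + (z.im + 1) ^ 2 := by
      rw [Complex.sq_norm, Complex.normSq_apply]
      simp only [Complex.add_re, Complex.add_im, Complex.I_re, Complex.I_im]
      ring
    have hz2' : ‖z‖ ^ 2 = z.re ^ 2 + z.im ^ 2 := by
      rw [Complex.sq_norm, Complex.normSq_apply]; ring
    have hBA : (1 + ‖z‖) ^ 2 ≤ 2 * ‖z + I‖ ^ 2 := by
      nlinarith [sq_nonneg (1 - ‖z‖), norm_nonneg z, hz]
    calc (‖z + I‖ ^ 2)⁻¹ = 1 / ‖z + I‖ ^ 2 := (one_div _).symm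
      _ ≤ 2 / (1 + ‖z‖) ^ 2 := by
          rw [div_le_div_iff₀ (by positivity) (by positivity)]
          nlinarith
      _ = 2 * ((1 + ‖z‖) ^ 2)⁻¹ := by rw [div_eq_mul_inv]
  set w : ℂ := (z - I) / (z + I) with hw_def
  have hterm : ∀ j : ℕ, ‖c j * (w ^ j * (z + I) ^ (-2 : ℤ))‖ ≤
      ‖c j‖ * ‖z + I‖ ^ (-2:ℤ) := by
    intro j
    rw [norm_mul, norm_mul, norm_pow, norm_zpow]
    have hwj : ‖w‖ ^ j ≤ 1 := pow_le_one₀ (norm_nonneg w) hw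
    calc ‖c j‖ * (‖w‖ ^ j * ‖z + I‖ ^ (-2:ℤ))
        ≤ ‖c j‖ * (1 * ‖z + I‖ ^ (-2:ℤ)) := by
          apply mul_le_mul_of_nonneg_left _ (norm_nonneg _)
          exact mul_le_mul_of_nonneg_right hwj (zpow_pos hzI _).le
      _ = ‖c j‖ * ‖z + I‖ ^ (-2:ℤ) := by rw [one_mul]
  have hns : Summable (fun j => ‖c j * (w ^ j * (z + I) ^ (-2 : ℤ))‖) :=
    Summable.of_nonneg_of_le (fun j => norm_nonneg _) hterm (hcsum.mul_right _)
  set S : ℝ := ∑' j : ℕ, ‖c j‖ ^ 2 * (1 + 8 * ((j : ℝ) + 1) ^ 2) ^ (1 + ε) *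
      (Real.pi / (4 * ((j : ℝ) + 1))) with hS_def
  have hSnn : 0 ≤ Real.sqrt S := Real.sqrt_nonneg _
  calc ‖f z‖ = ‖∑' j, c j * (w ^ j * (z + I) ^ (-2 : ℤ))‖ := by rw [(hf z hz).tsum_eq]
    _ ≤ ∑' j, ‖c j * (w ^ j * (z + I) ^ (-2 : ℤ))‖ := norm_tsum_le_tsum_norm hns
    _ ≤ ∑' j, ‖c j‖ * ‖z + I‖ ^ (-2:ℤ) :=
        Summable.tsum_le_tsum hterm hns (hcsum.mul_right _)
    _ = (∑' j, ‖c j‖) * ‖z + I‖ ^ (-2:ℤ) := tsum_mul_right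
    _ ≤ (Real.sqrt S * Real.sqrt K) * ‖z + I‖ ^ (-2:ℤ) :=
        mul_le_mul_of_nonneg_right hcbound (zpow_pos hzI _).le
    _ ≤ (Real.sqrt S * Real.sqrt K) * (2 * (1 + ‖z‖) ^ (-2:ℤ)) :=
        mul_le_mul_of_nonneg_left hzpow (by positivity)
    _ = (2 * Real.sqrt K) * Real.sqrt S * (1 + ‖z‖) ^ (-2:ℤ) := by ring
    _ ≤ (2 * Real.sqrt K + 1) * Real.sqrt S * (1 + ‖z‖) ^ (-2:ℤ) := by
        have hBz : (0:ℝ) ≤ (1 + ‖z‖) ^ (-2:ℤ) := (zpow_pos hBpos _).le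
        nlinarith [Real.sqrt_nonneg K]
end
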